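/- arXiv:1703.04756 — 5 statements merged into one kernel-verified Lean document; each statement's English description precedes it below -/
import Mathlib

section
/- Let f be a deterministic anonymous voting rule that is not constant on unanimous profiles, with n ≥ 2 voters. Then for any deterministic weighting scheme there exists a sequence of vote profiles and loss functions of length T such that the regret of the scheme is at least T/n. -/
open Finset

attribute [local instance] Classical.propDecidable

/-- Rankings (linear orders) over `m` alternatives, as permutations of `Fin m`;
`σ a` is the position of alternative `a` (position `0` is the top). -/
abbrev Rk (m : ℕ) := Equiv.Perm (Fin m)

/-- `π` is a distribution (an anonymous vote profile when defined on rankings). -/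
def IsDist {α : Type*} [Fintype α] (π : α → ℝ) : Prop :=
  (∀ x, 0 ≤ π x) ∧ ∑ x, π x = 1

/-- The anonymous vote profile induced by weights `w` on vote profile `σ`:
`π_τ` is the fraction of the total weight placed on ranking `τ`. -/
noncomputable def anonProfile {n m : ℕ} (σ : Fin n → Rk m) (w : Fin n → ℝ) :
    Rk m → ℝ :=
  fun τ => (∑ i, if σ i = τ then w i else 0) / (∑ i, w i)

/-- Expected loss of the alternative chosen by rule `f` on profile `π`
under loss vector `ℓ`: `L_f(π, ℓ) = f(π)·ℓ`. -/
noncomputable def expLoss {m : ℕ} (f : (Rk m → ℝ) → Fin m → ℝ)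
    (π : Rk m → ℝ) (ℓ : Fin m → ℝ) : ℝ :=
  ∑ a, f π a * ℓ a

/-- The unanimous anonymous profile placing all weight on ranking `τ`. -/
noncomputable def unan {m : ℕ} (τ : Rk m) : Rk m → ℝ :=
  fun σ => if σ = τ then 1 else 0

/-- The history available to the weighting scheme at time `t`: the vote profiles
and loss vectors of all previous rounds `s < t`. -/
def hist {n m T : ℕ} (σ : Fin T → Fin n → Rk m) (ℓ : Fin T → Fin m → ℝ) (t : Fin T) :
    List ((Fin n → Rk m) × (Fin m → ℝ)) :=
  ((List.finRange T).take t.1).map fun s => (σ s, ℓ s)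

/-- If a deterministic voting rule `f` is not constant on unanimous
profiles and there are `n ≥ 2` voters, then for every deterministic weighting scheme `W`
there is an adversarial sequence of vote profiles and loss functions (with losses in
`[0,1]`) of length `T` on which the scheme's regret is at least `T/n`. -/
theorem deterministic_rule_linear_regret (n m T : ℕ) (hn : 2 ≤ n)
    (f : (Rk m → ℝ) → Fin m → ℝ)
    (hdet : ∀ π, ∃ a, f π = Pi.single a 1)
    (hnonconst : ∃ τ τ' : Rk m, f (unan τ) ≠ f (unan τ'))
    (W : List ((Fin n → Rk m) × (Fin m → ℝ)) → Fin n → ℝ)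
    (hW : ∀ h, (∀ i, 0 ≤ W h i) ∧ 0 < ∑ i, W h i) :
    ∃ (σ : Fin T → Fin n → Rk m) (ℓ : Fin T → Fin m → ℝ),
      (∀ t a, ℓ t a ∈ Set.Icc (0 : ℝ) 1) ∧
      (T : ℝ) / (n : ℝ) ≤
        (∑ t, expLoss f (anonProfile (σ t) (W (hist σ ℓ t))) (ℓ t))
          - Finset.univ.inf'
              (Finset.univ_nonempty_iff.mpr (Fin.pos_iff_nonempty.mp (by omega)))
              (fun i => ∑ t, expLoss f (anonProfile (σ t) (Pi.single i 1)) (ℓ t)) := by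
  classical
  obtain ⟨τ, τ', hττ'⟩ := hnonconst
  obtain ⟨a, ha⟩ := hdet (unan τ)
  obtain ⟨a', ha'⟩ := hdet (unan τ')
  have haa' : a ≠ a' := by rintro rfl; exact hττ' (ha.trans ha'.symm)
  set v0 : Fin n := ⟨0, by omega⟩ with hv0
  set v1 : Fin n := ⟨1, by omega⟩ with hv1
  have hv01 : v1 ≠ v0 := by simp [hv0, hv1, Fin.ext_iff]
  set σ0 : Fin n → Rk m := fun i => if i = v0 then τ else τ' with hσ0
  set nextLoss : List ((Fin n → Rk m) × (Fin m → ℝ)) → Fin m → ℝ := fun h =>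
    Pi.single (Classical.choose (hdet (anonProfile σ0 (W h)))) 1 with hnext
  set H : ℕ → List ((Fin n → Rk m) × (Fin m → ℝ)) :=
    fun t => Nat.rec [] (fun _ hs => hs ++ [(σ0, nextLoss hs)]) t with hH
  have Hsucc : ∀ k, H (k+1) = H k ++ [(σ0, nextLoss (H k))] := fun k => rfl
  set σ : Fin T → Fin n → Rk m := fun _ => σ0 with hσ
  set ℓ : Fin T → Fin m → ℝ := fun t => nextLoss (H t.1) with hℓ
  set b : Fin T → Fin m := fun t => Classical.choose (hdet (anonProfile σ0 (W (H t.1)))) with hb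
  have hbspec : ∀ t : Fin T, f (anonProfile σ0 (W (H t.1))) = Pi.single (b t) 1 :=
    fun t => Classical.choose_spec (hdet (anonProfile σ0 (W (H t.1))))
  have hℓb : ∀ t : Fin T, ℓ t = Pi.single (b t) 1 := fun t => rfl
  -- history equals H
  have hist_eq : ∀ t : Fin T, hist σ ℓ t = H t.1 := by
    intro t
    have key : ∀ k, k ≤ T →
        ((List.finRange T).take k).map (fun s => (σ s, ℓ s)) = H k := by
      intro k
      induction k with
      | zero => intro _; simp [hH]
      | succ k ih =>
        intro hk
        have hkT : k < T := by omega
        rw [List.take_succ]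
        have : (List.finRange T)[k]? = some ⟨k, hkT⟩ := by
          simp [List.getElem?_eq_getElem, hkT, List.getElem_finRange]
        rw [this, List.map_append, ih (by omega), Hsucc]
        simp [hσ, hℓ]
    exact key t.1 t.2.le
  -- dot product of two point masses
  have dot : ∀ (c c' : Fin m), ∑ x, (Pi.single c 1 : Fin m → ℝ) x * (Pi.single c' 1 : Fin m → ℝ) x
      = if c = c' then 1 else 0 := by
    intro c c'
    simp [Pi.single_apply, ite_and, mul_ite, eq_comm]
  -- expert profiles are unanimous
  have expertProf : ∀ i : Fin n, anonProfile σ0 (Pi.single i 1) = unan (σ0 i) := by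
    intro i
    funext τ''
    simp only [anonProfile, unan, Pi.single_apply]
    have h1 : ∀ x : Fin n, (if σ0 x = τ'' then (if x = i then (1:ℝ) else 0) else 0)
        = if x = i then (if σ0 i = τ'' then (1:ℝ) else 0) else 0 := by
      intro x; by_cases hx : x = i <;> simp [hx]
    rw [Finset.sum_congr rfl (fun x _ => h1 x)]
    simp [Finset.sum_ite_eq', eq_comm]
  refine ⟨σ, ℓ, ?_, ?_⟩
  · intro t x
    rw [hℓb t]
    rcases eq_or_ne x (b t) with h | h <;> simp [h, Pi.single_apply]
  · -- the regret bound
    have hσ0v0 : σ0 v0 = τ := by simp [hσ0]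
    have hσ0v1 : σ0 v1 = τ' := by simp [hσ0, hv01]
    -- total loss of the scheme is T
    have hscheme : (∑ t, expLoss f (anonProfile (σ t) (W (hist σ ℓ t))) (ℓ t)) = T := by
      have h1 : ∀ t : Fin T, expLoss f (anonProfile (σ t) (W (hist σ ℓ t))) (ℓ t) = 1 := by
        intro t
        have : anonProfile (σ t) (W (hist σ ℓ t)) = anonProfile σ0 (W (H t.1)) := by
          rw [hist_eq t]
        rw [expLoss, this, hbspec t, hℓb t, dot]
        simp
      rw [Finset.sum_congr rfl (fun t _ => h1 t)]
      simp
    -- expert losses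
    have hexpert : ∀ (i : Fin n) (c : Fin m), f (unan (σ0 i)) = Pi.single c 1 →
        (∑ t, expLoss f (anonProfile (σ t) (Pi.single i 1)) (ℓ t))
          = ∑ t, (if c = b t then (1:ℝ) else 0) := by
      intro i c hc
      refine Finset.sum_congr rfl (fun t _ => ?_)
      have : anonProfile (σ t) (Pi.single i 1) = unan (σ0 i) := expertProf i
      rw [expLoss, this, hc, hℓb t, dot]
    have hE0 : (∑ t, expLoss f (anonProfile (σ t) (Pi.single v0 1)) (ℓ t))
        = ∑ t, (if a = b t then (1:ℝ) else 0) := hexpert v0 a (by rw [hσ0v0, ha])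
    have hE1 : (∑ t, expLoss f (anonProfile (σ t) (Pi.single v1 1)) (ℓ t))
        = ∑ t, (if a' = b t then (1:ℝ) else 0) := hexpert v1 a' (by rw [hσ0v1, ha'])
    have hsum : (∑ t, (if a = b t then (1:ℝ) else 0)) + (∑ t, (if a' = b t then (1:ℝ) else 0))
        ≤ T := by
      rw [← Finset.sum_add_distrib]
      calc (∑ t : Fin T, ((if a = b t then (1:ℝ) else 0) + (if a' = b t then (1:ℝ) else 0)))
          ≤ ∑ t : Fin T, (1:ℝ) := by
            refine Finset.sum_le_sum (fun t _ => ?_)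
            rcases eq_or_ne a (b t) with h | h
            · have : a' ≠ b t := by rw [← h]; exact haa'.symm
              simp [h, this]
            · rcases eq_or_ne a' (b t) with h' | h' <;> simp [h, h']
        _ = T := by simp
    set G : Fin n → ℝ := fun i => ∑ t, expLoss f (anonProfile (σ t) (Pi.single i 1)) (ℓ t)
      with hG
    have hinf : ∀ hne : (Finset.univ : Finset (Fin n)).Nonempty,
        Finset.univ.inf' hne G ≤ (T : ℝ) / 2 := by
      intro hne
      have h0 : Finset.univ.inf' hne G ≤ G v0 := Finset.inf'_le _ (Finset.mem_univ _)
      have h1 : Finset.univ.inf' hne G ≤ G v1 := Finset.inf'_le _ (Finset.mem_univ _)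
      simp only [hG] at h0 h1
      rw [hE0] at h0
      rw [hE1] at h1
      linarith
    have hTn : (T : ℝ) / n ≤ (T : ℝ) / 2 := by
      apply div_le_div_of_nonneg_left (by positivity) (by norm_num)
      exact_mod_cast hn
    rw [hscheme]
    have key : ∀ x : ℝ, x ≤ (T : ℝ) / 2 → (T : ℝ) / n ≤ (T : ℝ) - x := by
      intro x hx; linarith
    exact key _ (hinf _)
end

section
/- Combining the potential bound with E[Σ_i p^t_i (ℓ̃^t_i)²] ≤ n and unbiasedness, Algorithm 2 with η = √(2 ln n / (Tn)) has expected regret at most √(2 T n ln n): E[Σ_t L_f(π_{σ^t, e_{i^t}}, ℓ^t)] − min_i Σ_t L_f(π_{σ^t, e_i}, ℓ^t) ≤ √(2 T n ln n). -/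
open Finset

attribute [local instance] Classical.propDecidable

/-- The exponential-weights distribution over voters induced by cumulative
estimated losses `L`: `p_i ∝ exp(-η L_i)`. -/
noncomputable def pvec {n : ℕ} (η : ℝ) (L : Fin n → ℝ) (i : Fin n) : ℝ :=
  Real.exp (-η * L i) / ∑ j, Real.exp (-η * L j)

/-- Cumulative importance-weighted loss estimates of Algorithm 2 along the trajectory
`ω` (where `ω t = (i^t, a^t)` is the voter and alternative realized at step `t`):
`L̃^0 = 0` and `L̃^{t+1}_i = L̃^t_i + 1[i = i^t]·ℓ^t_{a^t}/p^t_{i^t}`. -/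
noncomputable def Ltil {n m : ℕ} (η : ℝ) (ℓ : ℕ → Fin m → ℝ)
    (ω : ℕ → Fin n × Fin m) : ℕ → Fin n → ℝ
  | 0 => fun _ => 0
  | t + 1 => fun i =>
      Ltil η ℓ ω t i +
        if i = (ω t).1 then ℓ t ((ω t).2) / pvec η (Ltil η ℓ ω t) ((ω t).1) else 0

/-- The probability that Algorithm 2 realizes the trajectory `ω` over the first `T`
steps: at each step `t`, voter `i^t` is drawn from the exponential-weights
distribution `p^t` and alternative `a^t` is drawn from `f(π_{σ^t, e_{i^t}})`. -/
noncomputable def trajProb {n m : ℕ} (η : ℝ) (f : (Rk m → ℝ) → Fin m → ℝ)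
    (σ : ℕ → Fin n → Rk m) (ℓ : ℕ → Fin m → ℝ) (ω : ℕ → Fin n × Fin m) (T : ℕ) : ℝ :=
  ∏ t ∈ Finset.range T,
    pvec η (Ltil η ℓ ω t) ((ω t).1)
      * f (anonProfile (σ t) (Pi.single ((ω t).1) 1)) ((ω t).2)

/-- Extension of a length-`T` trajectory to an infinite one (by junk values). -/
def extTraj {n m T : ℕ} (hn : 0 < n) (hm : 0 < m)
    (ω : Fin T → Fin n × Fin m) : ℕ → Fin n × Fin m :=
  fun t => if h : t < T then ω ⟨t, h⟩ else (⟨0, hn⟩, ⟨0, hm⟩)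


section Aux

lemma pvec_pos {n : ℕ} (hn : 0 < n) (η : ℝ) (L : Fin n → ℝ) (i : Fin n) :
    0 < pvec η L i := by
  have h : 0 < ∑ j, Real.exp (-η * L j) :=
    Finset.sum_pos (fun j _ => Real.exp_pos _)
      (Finset.univ_nonempty_iff.mpr (Fin.pos_iff_nonempty.mp hn))
  exact div_pos (Real.exp_pos _) h

lemma pvec_sum {n : ℕ} (hn : 0 < n) (η : ℝ) (L : Fin n → ℝ) :
    ∑ i, pvec η L i = 1 := by
  have h : 0 < ∑ j, Real.exp (-η * L j) :=
    Finset.sum_pos (fun j _ => Real.exp_pos _)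
      (Finset.univ_nonempty_iff.mpr (Fin.pos_iff_nonempty.mp hn))
  unfold pvec
  rw [← Finset.sum_div, div_self h.ne']

lemma exp_neg_le_quad {x : ℝ} (hx : 0 ≤ x) : Real.exp (-x) ≤ 1 - x + x ^ 2 / 2 := by
  have key : MonotoneOn (fun z : ℝ => 1 - z + z ^ 2 / 2 - Real.exp (-z)) (Set.Ici 0) := by
    apply monotoneOn_of_deriv_nonneg (convex_Ici 0)
    · exact Continuous.continuousOn (by continuity)
    · intro y hy
      exact (by fun_prop : Differentiable ℝ (fun z : ℝ => 1 - z + z ^ 2 / 2 - Real.exp (-z))).differentiableAt.differentiableWithinAt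
    · intro y hy
      have hd : HasDerivAt (fun z : ℝ => 1 - z + z ^ 2 / 2 - Real.exp (-z))
          (-1 + y + Real.exp (-y)) y := by
        have h1 : HasDerivAt (fun z : ℝ => 1 - z) (-1) y := by
          simpa using (hasDerivAt_id y).const_sub 1
        have h2 : HasDerivAt (fun z : ℝ => z ^ 2 / 2) y y := by
          have := (hasDerivAt_pow 2 y).div_const 2
          simpa using this
        have h3 : HasDerivAt (fun z : ℝ => Real.exp (-z)) (-Real.exp (-y)) y := by
          have := ((hasDerivAt_id y).neg).exp
          simpa using this
        have := (h1.add h2).sub h3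
        exact this.congr_deriv (by ring)
      rw [hd.deriv]
      nlinarith [Real.add_one_le_exp (-y)]
  have h0 := key (Set.self_mem_Ici) (Set.mem_Ici.mpr hx) hx
  simp only [neg_zero, Real.exp_zero] at h0
  nlinarith [h0]


variable {n m : ℕ}

lemma Ltil_congr (η : ℝ) (ℓ : ℕ → Fin m → ℝ) {ω ω' : ℕ → Fin n × Fin m} :
    ∀ t : ℕ, (∀ s < t, ω s = ω' s) → Ltil η ℓ ω t = Ltil η ℓ ω' t
  | 0, _ => by funext i; simp [Ltil]
  | t + 1, h => by
    have ih : Ltil η ℓ ω t = Ltil η ℓ ω' t :=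
      Ltil_congr η ℓ t (fun s hs => h s (hs.trans (Nat.lt_succ_self t)))
    funext i
    simp only [Ltil, ih, h t (Nat.lt_succ_self t)]

lemma extTraj_snoc_lt {T : ℕ} (hn : 0 < n) (hm : 0 < m)
    (ω : Fin T → Fin n × Fin m) (x : Fin n × Fin m) {t : ℕ} (ht : t < T) :
    extTraj hn hm (Fin.snoc ω x) t = extTraj hn hm ω t := by
  simp only [extTraj, dif_pos ht, dif_pos (ht.trans (Nat.lt_succ_self T))]
  simp [Fin.snoc, ht]

lemma extTraj_snoc_last {T : ℕ} (hn : 0 < n) (hm : 0 < m)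
    (ω : Fin T → Fin n × Fin m) (x : Fin n × Fin m) :
    extTraj hn hm (Fin.snoc ω x) T = x := by
  simp only [extTraj, dif_pos (Nat.lt_succ_self T)]
  simp [Fin.snoc]

lemma Ltil_ext_snoc {T : ℕ} (hn : 0 < n) (hm : 0 < m) (η : ℝ) (ℓ : ℕ → Fin m → ℝ)
    (ω : Fin T → Fin n × Fin m) (x : Fin n × Fin m) {t : ℕ} (ht : t ≤ T) :
    Ltil η ℓ (extTraj hn hm (Fin.snoc ω x)) t = Ltil η ℓ (extTraj hn hm ω) t :=
  Ltil_congr η ℓ t (fun s hs => extTraj_snoc_lt hn hm ω x (lt_of_lt_of_le hs ht))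

lemma trajProb_snoc {T : ℕ} (hn : 0 < n) (hm : 0 < m) (η : ℝ)
    (f : (Rk m → ℝ) → Fin m → ℝ) (σ : ℕ → Fin n → Rk m) (ℓ : ℕ → Fin m → ℝ)
    (ω : Fin T → Fin n × Fin m) (x : Fin n × Fin m) :
    trajProb η f σ ℓ (extTraj hn hm (Fin.snoc ω x)) (T + 1) =
      trajProb η f σ ℓ (extTraj hn hm ω) T *
        (pvec η (Ltil η ℓ (extTraj hn hm ω) T) x.1 *
          f (anonProfile (σ T) (Pi.single x.1 1)) x.2) := by
  unfold trajProb
  rw [Finset.prod_range_succ, extTraj_snoc_last hn hm ω x,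
      Ltil_ext_snoc hn hm η ℓ ω x le_rfl]
  have hprod : (∏ t ∈ Finset.range T,
      pvec η (Ltil η ℓ (extTraj hn hm (Fin.snoc ω x)) t) ((extTraj hn hm (Fin.snoc ω x) t).1)
        * f (anonProfile (σ t) (Pi.single ((extTraj hn hm (Fin.snoc ω x) t).1) 1))
            ((extTraj hn hm (Fin.snoc ω x) t).2)) =
      ∏ t ∈ Finset.range T,
      pvec η (Ltil η ℓ (extTraj hn hm ω) t) ((extTraj hn hm ω t).1)
        * f (anonProfile (σ t) (Pi.single ((extTraj hn hm ω t).1) 1))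
            ((extTraj hn hm ω t).2) := by
    apply Finset.prod_congr rfl
    intro t ht
    rw [Finset.mem_range] at ht
    rw [extTraj_snoc_lt hn hm ω x ht, Ltil_ext_snoc hn hm η ℓ ω x ht.le]
  rw [hprod]

lemma sum_snoc {X : Type*} [Fintype X] {T : ℕ} (g : (Fin (T+1) → X) → ℝ) :
    ∑ ω : Fin (T+1) → X, g ω = ∑ ω : Fin T → X, ∑ x : X, g (Fin.snoc ω x) := by
  rw [← (Fin.snocEquiv (fun _ => X)).sum_comp g, Fintype.sum_prod_type, Finset.sum_comm]
  rfl

end Aux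

section Tower

variable {n m : ℕ} (hn : 0 < n) (hm : 0 < m) (η : ℝ)
  (f : (Rk m → ℝ) → Fin m → ℝ) (σ : ℕ → Fin n → Rk m) (ℓ : ℕ → Fin m → ℝ)

/-- per-step expected loss of voter `i` -/
noncomputable def cexp (t : ℕ) (i : Fin n) : ℝ :=
  expLoss f (anonProfile (σ t) (Pi.single i 1)) (ℓ t)

/-- expectation of a trajectory functional over `T` steps -/
noncomputable def EE (T : ℕ) (φ : (ℕ → Fin n × Fin m) → ℝ) : ℝ :=
  ∑ ω : Fin T → Fin n × Fin m,
    trajProb η f σ ℓ (extTraj hn hm ω) T * φ (extTraj hn hm ω)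

lemma EE_succ (T : ℕ) (φ : (ℕ → Fin n × Fin m) → ℝ) :
    EE hn hm η f σ ℓ (T + 1) φ =
      ∑ ω : Fin T → Fin n × Fin m, trajProb η f σ ℓ (extTraj hn hm ω) T *
        ∑ x : Fin n × Fin m,
          pvec η (Ltil η ℓ (extTraj hn hm ω) T) x.1 *
            f (anonProfile (σ T) (Pi.single x.1 1)) x.2 *
              φ (extTraj hn hm (Fin.snoc ω x)) := by
  unfold EE
  rw [sum_snoc]
  apply Finset.sum_congr rfl
  intro ω _
  rw [Finset.mul_sum]
  apply Finset.sum_congr rfl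
  intro x _
  rw [trajProb_snoc]
  ring

lemma EE_one (hf : ∀ π, IsDist (f π)) : ∀ T : ℕ, EE hn hm η f σ ℓ T (fun _ => 1) = 1 := by
  intro T
  induction T with
  | zero =>
    simp [EE, trajProb]
  | succ T ih =>
    rw [EE_succ]
    have h : ∀ ω : Fin T → Fin n × Fin m,
        (∑ x : Fin n × Fin m,
          pvec η (Ltil η ℓ (extTraj hn hm ω) T) x.1 *
            f (anonProfile (σ T) (Pi.single x.1 1)) x.2 * (1 : ℝ)) = 1 := by
      intro ω
      rw [Fintype.sum_prod_type]
      have : ∀ i : Fin n, (∑ a : Fin m,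
          pvec η (Ltil η ℓ (extTraj hn hm ω) T) i *
            f (anonProfile (σ T) (Pi.single i 1)) a * (1:ℝ)) =
          pvec η (Ltil η ℓ (extTraj hn hm ω) T) i := by
        intro i
        simp only [mul_one, ← Finset.mul_sum]
        rw [(hf _).2, mul_one]
      rw [Finset.sum_congr rfl (fun i _ => this i)]
      exact pvec_sum hn η _
    calc (∑ ω : Fin T → Fin n × Fin m, trajProb η f σ ℓ (extTraj hn hm ω) T *
        ∑ x : Fin n × Fin m,
          pvec η (Ltil η ℓ (extTraj hn hm ω) T) x.1 *
            f (anonProfile (σ T) (Pi.single x.1 1)) x.2 * (1:ℝ))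
        = ∑ ω : Fin T → Fin n × Fin m, trajProb η f σ ℓ (extTraj hn hm ω) T * 1 := by
          apply Finset.sum_congr rfl; intro ω _; rw [h ω]
      _ = 1 := by simpa [EE] using ih

end Tower

section Tower2

variable {n m : ℕ}

lemma Ltil_succ (η : ℝ) (ℓ : ℕ → Fin m → ℝ) (ω : ℕ → Fin n × Fin m) (t : ℕ) :
    Ltil η ℓ ω (t+1) = fun i => Ltil η ℓ ω t i +
      if i = (ω t).1 then ℓ t ((ω t).2) / pvec η (Ltil η ℓ ω t) ((ω t).1) else 0 := rfl

lemma sum_pF (hn : 0 < n) (η : ℝ) (f : (Rk m → ℝ) → Fin m → ℝ) (σ : ℕ → Fin n → Rk m)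
    (hf : ∀ π, IsDist (f π)) (L : Fin n → ℝ) (t : ℕ) :
    ∑ x : Fin n × Fin m, pvec η L x.1 *
      f (anonProfile (σ t) (Pi.single x.1 1)) x.2 = 1 := by
  rw [Fintype.sum_prod_type]
  have h : ∀ i : Fin n, (∑ a : Fin m,
      pvec η L i * f (anonProfile (σ t) (Pi.single i 1)) a) = pvec η L i := by
    intro i
    rw [← Finset.mul_sum, (hf _).2, mul_one]
  rw [Finset.sum_congr rfl (fun i _ => h i)]
  exact pvec_sum hn η _

lemma sum_traj (hn : 0 < n) (hm : 0 < m) (η : ℝ) (f : (Rk m → ℝ) → Fin m → ℝ)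
    (σ : ℕ → Fin n → Rk m) (ℓ : ℕ → Fin m → ℝ) (hf : ∀ π, IsDist (f π)) (T : ℕ) :
    ∑ ω : Fin T → Fin n × Fin m, trajProb η f σ ℓ (extTraj hn hm ω) T = 1 := by
  have := EE_one hn hm η f σ ℓ hf T
  simpa [EE] using this

lemma trajProb_nonneg (hn : 0 < n) (η : ℝ) (f : (Rk m → ℝ) → Fin m → ℝ)
    (σ : ℕ → Fin n → Rk m) (ℓ : ℕ → Fin m → ℝ) (hf : ∀ π, IsDist (f π))
    (ω : ℕ → Fin n × Fin m) (T : ℕ) :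
    0 ≤ trajProb η f σ ℓ ω T := by
  apply Finset.prod_nonneg
  intro t _
  exact mul_nonneg (pvec_pos hn η _ _).le ((hf _).1 _)

/-- unbiasedness of the loss estimates -/
lemma EE_Ltil (hn : 0 < n) (hm : 0 < m) (η : ℝ) (f : (Rk m → ℝ) → Fin m → ℝ)
    (σ : ℕ → Fin n → Rk m) (ℓ : ℕ → Fin m → ℝ) (hf : ∀ π, IsDist (f π)) (k : Fin n) :
    ∀ T : ℕ, EE hn hm η f σ ℓ T (fun ω' => Ltil η ℓ ω' T k)
      = ∑ t ∈ Finset.range T, cexp f σ ℓ t k := by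
  intro T
  induction T with
  | zero => simp [EE, trajProb, Ltil]
  | succ T ih =>
    rw [EE_succ, Finset.sum_range_succ, ← ih]
    have key : ∀ ω : Fin T → Fin n × Fin m,
        (∑ x : Fin n × Fin m, pvec η (Ltil η ℓ (extTraj hn hm ω) T) x.1 *
          f (anonProfile (σ T) (Pi.single x.1 1)) x.2 *
            Ltil η ℓ (extTraj hn hm (Fin.snoc ω x)) (T+1) k)
        = Ltil η ℓ (extTraj hn hm ω) T k + cexp f σ ℓ T k := by
      intro ω
      have hx : ∀ x : Fin n × Fin m, Ltil η ℓ (extTraj hn hm (Fin.snoc ω x)) (T+1) k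
          = Ltil η ℓ (extTraj hn hm ω) T k +
            if k = x.1 then ℓ T x.2 / pvec η (Ltil η ℓ (extTraj hn hm ω) T) x.1 else 0 := by
        intro x
        rw [Ltil_succ, Ltil_ext_snoc hn hm η ℓ ω x le_rfl, extTraj_snoc_last hn hm ω x]
      have split : ∀ x : Fin n × Fin m,
          pvec η (Ltil η ℓ (extTraj hn hm ω) T) x.1 *
            f (anonProfile (σ T) (Pi.single x.1 1)) x.2 *
              Ltil η ℓ (extTraj hn hm (Fin.snoc ω x)) (T+1) k
          = pvec η (Ltil η ℓ (extTraj hn hm ω) T) x.1 *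
              f (anonProfile (σ T) (Pi.single x.1 1)) x.2 *
                Ltil η ℓ (extTraj hn hm ω) T k
            + (if k = x.1 then f (anonProfile (σ T) (Pi.single x.1 1)) x.2 * ℓ T x.2 else 0) := by
        intro x
        rw [hx x, mul_add]
        congr 1
        split
        next h =>
          subst h
          have hp := (pvec_pos hn η (Ltil η ℓ (extTraj hn hm ω) T) x.1).ne'
          field_simp
        next h => simp
      rw [Finset.sum_congr rfl (fun x _ => split x), Finset.sum_add_distrib,
        ← Finset.sum_mul, sum_pF hn η f σ hf, one_mul]
      congr 1
      rw [Fintype.sum_prod_type]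
      have hrow : ∀ i : Fin n, (∑ a : Fin m,
          if k = i then f (anonProfile (σ T) (Pi.single i 1)) a * ℓ T a else 0)
          = if k = i then ∑ a, f (anonProfile (σ T) (Pi.single i 1)) a * ℓ T a else 0 := by
        intro i; split <;> simp
      rw [Finset.sum_congr rfl (fun i _ => hrow i), Finset.sum_ite_eq, if_pos (Finset.mem_univ k)]
      rfl
    calc (∑ ω : Fin T → Fin n × Fin m, trajProb η f σ ℓ (extTraj hn hm ω) T *
          ∑ x : Fin n × Fin m, pvec η (Ltil η ℓ (extTraj hn hm ω) T) x.1 *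
            f (anonProfile (σ T) (Pi.single x.1 1)) x.2 *
              Ltil η ℓ (extTraj hn hm (Fin.snoc ω x)) (T+1) k)
        = ∑ ω : Fin T → Fin n × Fin m, (trajProb η f σ ℓ (extTraj hn hm ω) T *
            Ltil η ℓ (extTraj hn hm ω) T k
          + trajProb η f σ ℓ (extTraj hn hm ω) T * cexp f σ ℓ T k) := by
          apply Finset.sum_congr rfl; intro ω _; rw [key ω, mul_add]
      _ = EE hn hm η f σ ℓ T (fun ω' => Ltil η ℓ ω' T k) + cexp f σ ℓ T k := by
          rw [Finset.sum_add_distrib, ← Finset.sum_mul, sum_traj hn hm η f σ ℓ hf, one_mul]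
          rfl

end Tower2

section Tower3

variable {n m : ℕ}

/-- tower property: expected per-step loss of elected alternative equals expected
conditional loss of elected voter -/
lemma EE_swap (hn : 0 < n) (hm : 0 < m) (η : ℝ) (f : (Rk m → ℝ) → Fin m → ℝ)
    (σ : ℕ → Fin n → Rk m) (ℓ : ℕ → Fin m → ℝ) (hf : ∀ π, IsDist (f π)) :
    ∀ T : ℕ, EE hn hm η f σ ℓ T
        (fun ω' => ∑ t ∈ Finset.range T, (cexp f σ ℓ t (ω' t).1 - ℓ t (ω' t).2)) = 0 := by
  intro T
  induction T with
  | zero => simp [EE]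
  | succ T ih =>
    rw [EE_succ]
    have key : ∀ ω : Fin T → Fin n × Fin m,
        (∑ x : Fin n × Fin m, pvec η (Ltil η ℓ (extTraj hn hm ω) T) x.1 *
          f (anonProfile (σ T) (Pi.single x.1 1)) x.2 *
            ∑ t ∈ Finset.range (T+1),
              (cexp f σ ℓ t (extTraj hn hm (Fin.snoc ω x) t).1
                - ℓ t (extTraj hn hm (Fin.snoc ω x) t).2))
        = ∑ t ∈ Finset.range T, (cexp f σ ℓ t (extTraj hn hm ω t).1
            - ℓ t (extTraj hn hm ω t).2) := by
      intro ω
      have hx : ∀ x : Fin n × Fin m,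
          (∑ t ∈ Finset.range (T+1),
              (cexp f σ ℓ t (extTraj hn hm (Fin.snoc ω x) t).1
                - ℓ t (extTraj hn hm (Fin.snoc ω x) t).2))
          = (∑ t ∈ Finset.range T, (cexp f σ ℓ t (extTraj hn hm ω t).1
              - ℓ t (extTraj hn hm ω t).2)) + (cexp f σ ℓ T x.1 - ℓ T x.2) := by
        intro x
        rw [Finset.sum_range_succ, extTraj_snoc_last hn hm ω x]
        congr 1
        apply Finset.sum_congr rfl
        intro t ht
        rw [Finset.mem_range] at ht
        rw [extTraj_snoc_lt hn hm ω x ht]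
      have split : ∀ x : Fin n × Fin m,
          pvec η (Ltil η ℓ (extTraj hn hm ω) T) x.1 *
            f (anonProfile (σ T) (Pi.single x.1 1)) x.2 *
              ∑ t ∈ Finset.range (T+1),
                (cexp f σ ℓ t (extTraj hn hm (Fin.snoc ω x) t).1
                  - ℓ t (extTraj hn hm (Fin.snoc ω x) t).2)
          = pvec η (Ltil η ℓ (extTraj hn hm ω) T) x.1 *
              f (anonProfile (σ T) (Pi.single x.1 1)) x.2 *
                (∑ t ∈ Finset.range T, (cexp f σ ℓ t (extTraj hn hm ω t).1
                    - ℓ t (extTraj hn hm ω t).2))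
            + pvec η (Ltil η ℓ (extTraj hn hm ω) T) x.1 *
                f (anonProfile (σ T) (Pi.single x.1 1)) x.2 *
                  (cexp f σ ℓ T x.1 - ℓ T x.2) := by
        intro x
        rw [hx x, mul_add]
      rw [Finset.sum_congr rfl (fun x _ => split x), Finset.sum_add_distrib,
        ← Finset.sum_mul, sum_pF hn η f σ hf, one_mul]
      have hzero : (∑ x : Fin n × Fin m, pvec η (Ltil η ℓ (extTraj hn hm ω) T) x.1 *
          f (anonProfile (σ T) (Pi.single x.1 1)) x.2 *
            (cexp f σ ℓ T x.1 - ℓ T x.2)) = 0 := by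
        rw [Fintype.sum_prod_type]
        have hrow : ∀ i : Fin n, (∑ a : Fin m,
            pvec η (Ltil η ℓ (extTraj hn hm ω) T) i *
              f (anonProfile (σ T) (Pi.single i 1)) a * (cexp f σ ℓ T i - ℓ T a)) = 0 := by
          intro i
          have expand : ∀ a : Fin m, pvec η (Ltil η ℓ (extTraj hn hm ω) T) i *
              f (anonProfile (σ T) (Pi.single i 1)) a * (cexp f σ ℓ T i - ℓ T a)
              = pvec η (Ltil η ℓ (extTraj hn hm ω) T) i *
                (f (anonProfile (σ T) (Pi.single i 1)) a * cexp f σ ℓ T i)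
                - pvec η (Ltil η ℓ (extTraj hn hm ω) T) i *
                  (f (anonProfile (σ T) (Pi.single i 1)) a * ℓ T a) := by
            intro a; ring
          rw [Finset.sum_congr rfl (fun a _ => expand a), Finset.sum_sub_distrib,
            ← Finset.mul_sum, ← Finset.mul_sum, ← Finset.sum_mul, (hf _).2, one_mul]
          have : (∑ a, f (anonProfile (σ T) (Pi.single i 1)) a * ℓ T a) = cexp f σ ℓ T i := rfl
          rw [this, sub_self]
        rw [Finset.sum_congr rfl (fun i _ => hrow i), Finset.sum_const, smul_zero]
      rw [hzero, add_zero]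
    calc (∑ ω : Fin T → Fin n × Fin m, trajProb η f σ ℓ (extTraj hn hm ω) T *
          ∑ x : Fin n × Fin m, pvec η (Ltil η ℓ (extTraj hn hm ω) T) x.1 *
            f (anonProfile (σ T) (Pi.single x.1 1)) x.2 *
              ∑ t ∈ Finset.range (T+1),
                (cexp f σ ℓ t (extTraj hn hm (Fin.snoc ω x) t).1
                  - ℓ t (extTraj hn hm (Fin.snoc ω x) t).2))
        = ∑ ω : Fin T → Fin n × Fin m, trajProb η f σ ℓ (extTraj hn hm ω) T *
            ∑ t ∈ Finset.range T, (cexp f σ ℓ t (extTraj hn hm ω t).1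
              - ℓ t (extTraj hn hm ω t).2) := by
          apply Finset.sum_congr rfl; intro ω _; rw [key ω]
      _ = 0 := ih

/-- second-moment bound -/
lemma EE_sq (hn : 0 < n) (hm : 0 < m) (η : ℝ) (f : (Rk m → ℝ) → Fin m → ℝ)
    (σ : ℕ → Fin n → Rk m) (ℓ : ℕ → Fin m → ℝ) (hf : ∀ π, IsDist (f π))
    (hℓ : ∀ t a, ℓ t a ∈ Set.Icc (0 : ℝ) 1) :
    ∀ T : ℕ, EE hn hm η f σ ℓ T
        (fun ω' => ∑ t ∈ Finset.range T,
          (ℓ t (ω' t).2)^2 / pvec η (Ltil η ℓ ω' t) (ω' t).1) ≤ n * T := by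
  intro T
  induction T with
  | zero => simp [EE]
  | succ T ih =>
    rw [EE_succ]
    have key : ∀ ω : Fin T → Fin n × Fin m,
        (∑ x : Fin n × Fin m, pvec η (Ltil η ℓ (extTraj hn hm ω) T) x.1 *
          f (anonProfile (σ T) (Pi.single x.1 1)) x.2 *
            ∑ t ∈ Finset.range (T+1), (ℓ t (extTraj hn hm (Fin.snoc ω x) t).2)^2 /
              pvec η (Ltil η ℓ (extTraj hn hm (Fin.snoc ω x)) t)
                (extTraj hn hm (Fin.snoc ω x) t).1)
        ≤ (∑ t ∈ Finset.range T, (ℓ t (extTraj hn hm ω t).2)^2 /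
            pvec η (Ltil η ℓ (extTraj hn hm ω) t) (extTraj hn hm ω t).1) + n := by
      intro ω
      have hx : ∀ x : Fin n × Fin m,
          (∑ t ∈ Finset.range (T+1), (ℓ t (extTraj hn hm (Fin.snoc ω x) t).2)^2 /
              pvec η (Ltil η ℓ (extTraj hn hm (Fin.snoc ω x)) t)
                (extTraj hn hm (Fin.snoc ω x) t).1)
          = (∑ t ∈ Finset.range T, (ℓ t (extTraj hn hm ω t).2)^2 /
              pvec η (Ltil η ℓ (extTraj hn hm ω) t) (extTraj hn hm ω t).1)
            + (ℓ T x.2)^2 / pvec η (Ltil η ℓ (extTraj hn hm ω) T) x.1 := by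
        intro x
        rw [Finset.sum_range_succ, extTraj_snoc_last hn hm ω x,
          Ltil_ext_snoc hn hm η ℓ ω x le_rfl]
        congr 1
        apply Finset.sum_congr rfl
        intro t ht
        rw [Finset.mem_range] at ht
        rw [extTraj_snoc_lt hn hm ω x ht, Ltil_ext_snoc hn hm η ℓ ω x ht.le]
      have split : ∀ x : Fin n × Fin m,
          pvec η (Ltil η ℓ (extTraj hn hm ω) T) x.1 *
            f (anonProfile (σ T) (Pi.single x.1 1)) x.2 *
              (∑ t ∈ Finset.range (T+1), (ℓ t (extTraj hn hm (Fin.snoc ω x) t).2)^2 /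
                pvec η (Ltil η ℓ (extTraj hn hm (Fin.snoc ω x)) t)
                  (extTraj hn hm (Fin.snoc ω x) t).1)
          = pvec η (Ltil η ℓ (extTraj hn hm ω) T) x.1 *
              f (anonProfile (σ T) (Pi.single x.1 1)) x.2 *
                (∑ t ∈ Finset.range T, (ℓ t (extTraj hn hm ω t).2)^2 /
                  pvec η (Ltil η ℓ (extTraj hn hm ω) t) (extTraj hn hm ω t).1)
            + f (anonProfile (σ T) (Pi.single x.1 1)) x.2 * (ℓ T x.2)^2 := by
        intro x
        rw [hx x, mul_add]
        congr 1
        have hp := (pvec_pos hn η (Ltil η ℓ (extTraj hn hm ω) T) x.1).ne'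
        field_simp
      rw [Finset.sum_congr rfl (fun x _ => split x), Finset.sum_add_distrib,
        ← Finset.sum_mul, sum_pF hn η f σ hf, one_mul]
      have hbound : (∑ x : Fin n × Fin m,
          f (anonProfile (σ T) (Pi.single x.1 1)) x.2 * (ℓ T x.2)^2) ≤ n := by
        rw [Fintype.sum_prod_type]
        have hrow : ∀ i : Fin n, (∑ a : Fin m,
            f (anonProfile (σ T) (Pi.single i 1)) a * (ℓ T a)^2) ≤ 1 := by
          intro i
          calc (∑ a : Fin m, f (anonProfile (σ T) (Pi.single i 1)) a * (ℓ T a)^2)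
              ≤ ∑ a : Fin m, f (anonProfile (σ T) (Pi.single i 1)) a := by
                apply Finset.sum_le_sum
                intro a _
                calc f (anonProfile (σ T) (Pi.single i 1)) a * (ℓ T a)^2
                    ≤ f (anonProfile (σ T) (Pi.single i 1)) a * 1 :=
                      mul_le_mul_of_nonneg_left (by nlinarith [(hℓ T a).1, (hℓ T a).2])
                        ((hf _).1 a)
                  _ = _ := mul_one _
            _ = 1 := (hf _).2
        calc (∑ i : Fin n, ∑ a : Fin m, f (anonProfile (σ T) (Pi.single i 1)) a * (ℓ T a)^2)
            ≤ ∑ _i : Fin n, (1:ℝ) := Finset.sum_le_sum (fun i _ => hrow i)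
          _ = n := by simp
      linarith
    calc (∑ ω : Fin T → Fin n × Fin m, trajProb η f σ ℓ (extTraj hn hm ω) T *
          ∑ x : Fin n × Fin m, pvec η (Ltil η ℓ (extTraj hn hm ω) T) x.1 *
            f (anonProfile (σ T) (Pi.single x.1 1)) x.2 *
              ∑ t ∈ Finset.range (T+1), (ℓ t (extTraj hn hm (Fin.snoc ω x) t).2)^2 /
                pvec η (Ltil η ℓ (extTraj hn hm (Fin.snoc ω x)) t)
                  (extTraj hn hm (Fin.snoc ω x) t).1)
        ≤ ∑ ω : Fin T → Fin n × Fin m, trajProb η f σ ℓ (extTraj hn hm ω) T *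
            ((∑ t ∈ Finset.range T, (ℓ t (extTraj hn hm ω t).2)^2 /
              pvec η (Ltil η ℓ (extTraj hn hm ω) t) (extTraj hn hm ω t).1) + n) := by
          apply Finset.sum_le_sum
          intro ω _
          exact mul_le_mul_of_nonneg_left (key ω) (trajProb_nonneg hn η f σ ℓ hf _ T)
      _ = (∑ ω : Fin T → Fin n × Fin m, trajProb η f σ ℓ (extTraj hn hm ω) T *
            ∑ t ∈ Finset.range T, (ℓ t (extTraj hn hm ω t).2)^2 /
              pvec η (Ltil η ℓ (extTraj hn hm ω) t) (extTraj hn hm ω t).1)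
          + (∑ ω : Fin T → Fin n × Fin m, trajProb η f σ ℓ (extTraj hn hm ω) T) * n := by
          rw [Finset.sum_mul, ← Finset.sum_add_distrib]
          apply Finset.sum_congr rfl
          intro ω _
          ring
      _ ≤ n * T + 1 * n := by
          rw [sum_traj hn hm η f σ ℓ hf]
          exact add_le_add_left ih _
      _ = n * (T + 1 : ℕ) := by push_cast; ring

end Tower3

lemma pathwise {n m : ℕ} (hn : 0 < n) {η : ℝ} (hη : 0 < η) (ℓ : ℕ → Fin m → ℝ)
    (hℓ : ∀ t a, ℓ t a ∈ Set.Icc (0:ℝ) 1) (ω : ℕ → Fin n × Fin m) (T : ℕ) (k : Fin n) :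
    ∑ t ∈ Finset.range T, ℓ t ((ω t).2) ≤ Ltil η ℓ ω T k + Real.log n / η
      + η / 2 * ∑ t ∈ Finset.range T,
          (ℓ t ((ω t).2))^2 / pvec η (Ltil η ℓ ω t) ((ω t).1) := by
  have hne : (Finset.univ : Finset (Fin n)).Nonempty :=
    Finset.univ_nonempty_iff.mpr (Fin.pos_iff_nonempty.mp hn)
  set W : ℕ → ℝ := fun t => ∑ i, Real.exp (-η * Ltil η ℓ ω t i) with hW
  have hWpos : ∀ t, 0 < W t := fun t =>
    Finset.sum_pos (fun i _ => Real.exp_pos _) hne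
  have hW0 : W 0 = n := by simp [hW, Ltil]
  -- abbreviations
  set g : ℕ → ℝ := fun t => ℓ t ((ω t).2) with hg
  set p : ℕ → ℝ := fun t => pvec η (Ltil η ℓ ω t) ((ω t).1) with hp
  have hppos : ∀ t, 0 < p t := fun t => pvec_pos hn η _ _
  have hg0 : ∀ t, 0 ≤ g t := fun t => (hℓ t _).1
  -- one-step bound
  have step : ∀ t, W (t+1) ≤ W t * Real.exp (-η * g t + η^2/2 * (g t)^2 / p t) := by
    intro t
    have hWt : W (t+1) = W t * ∑ i, pvec η (Ltil η ℓ ω t) i *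
        Real.exp (-η * (if i = (ω t).1 then g t / p t else 0)) := by
      rw [Finset.mul_sum, hW]
      apply Finset.sum_congr rfl
      intro i _
      rw [Ltil_succ]
      have h1 : -η * (Ltil η ℓ ω t i +
          (if i = (ω t).1 then ℓ t ((ω t).2) / pvec η (Ltil η ℓ ω t) ((ω t).1) else 0))
          = -η * Ltil η ℓ ω t i + -η * (if i = (ω t).1 then g t / p t else 0) := by
        rw [hg, hp]; ring
      rw [h1, Real.exp_add]
      have h2 : Real.exp (-η * Ltil η ℓ ω t i) = W t * pvec η (Ltil η ℓ ω t) i := by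
        rw [pvec, hW]
        field_simp
      rw [h2]; ring
    have hsum : (∑ i, pvec η (Ltil η ℓ ω t) i *
        Real.exp (-η * (if i = (ω t).1 then g t / p t else 0)))
        ≤ 1 - η * g t + η^2/2 * (g t)^2 / p t := by
      have hub : ∀ i : Fin n, pvec η (Ltil η ℓ ω t) i *
          Real.exp (-η * (if i = (ω t).1 then g t / p t else 0))
          ≤ pvec η (Ltil η ℓ ω t) i * (1 - η * (if i = (ω t).1 then g t / p t else 0)
              + (η * (if i = (ω t).1 then g t / p t else 0))^2 / 2) := by
        intro i
        apply mul_le_mul_of_nonneg_left _ (pvec_pos hn η _ _).le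
        have hδ : 0 ≤ η * (if i = (ω t).1 then g t / p t else 0) := by
          apply mul_nonneg hη.le
          split
          · exact div_nonneg (hg0 t) (hppos t).le
          · exact le_rfl
        have := exp_neg_le_quad hδ
        calc Real.exp (-η * (if i = (ω t).1 then g t / p t else 0))
            = Real.exp (-(η * (if i = (ω t).1 then g t / p t else 0))) := by rw [neg_mul]
          _ ≤ _ := by nlinarith [this]
      calc (∑ i, pvec η (Ltil η ℓ ω t) i *
            Real.exp (-η * (if i = (ω t).1 then g t / p t else 0)))
          ≤ ∑ i, pvec η (Ltil η ℓ ω t) i * (1 - η * (if i = (ω t).1 then g t / p t else 0)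
              + (η * (if i = (ω t).1 then g t / p t else 0))^2 / 2) :=
            Finset.sum_le_sum (fun i _ => hub i)
        _ = 1 - η * g t + η^2/2 * (g t)^2 / p t := by
            have expand : ∀ i : Fin n, pvec η (Ltil η ℓ ω t) i *
                (1 - η * (if i = (ω t).1 then g t / p t else 0)
                  + (η * (if i = (ω t).1 then g t / p t else 0))^2 / 2)
                = pvec η (Ltil η ℓ ω t) i
                  + (if i = (ω t).1 then
                      pvec η (Ltil η ℓ ω t) i * (- (η * (g t / p t))
                        + (η * (g t / p t))^2 / 2) else 0) := by
              intro i
              split <;> ring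
            rw [Finset.sum_congr rfl (fun i _ => expand i), Finset.sum_add_distrib,
              pvec_sum hn, Finset.sum_ite_eq', if_pos (Finset.mem_univ _)]
            have hpne := (hppos t).ne'
            rw [hp]
            field_simp
            have hpne2 : pvec η (Ltil η ℓ ω t) (ω t).1 ≠ 0 := (pvec_pos hn η _ _).ne'
            field_simp
            ring
    have hexp : 1 - η * g t + η^2/2 * (g t)^2 / p t
        ≤ Real.exp (-η * g t + η^2/2 * (g t)^2 / p t) := by
      have := Real.add_one_le_exp (-η * g t + η^2/2 * (g t)^2 / p t)
      linarith
    calc W (t+1) = W t * ∑ i, pvec η (Ltil η ℓ ω t) i *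
          Real.exp (-η * (if i = (ω t).1 then g t / p t else 0)) := hWt
      _ ≤ W t * (1 - η * g t + η^2/2 * (g t)^2 / p t) :=
          mul_le_mul_of_nonneg_left hsum (hWpos t).le
      _ ≤ W t * Real.exp (-η * g t + η^2/2 * (g t)^2 / p t) :=
          mul_le_mul_of_nonneg_left hexp (hWpos t).le
  -- telescoping
  have tele : ∀ S : ℕ, W S ≤ n * Real.exp (∑ t ∈ Finset.range S,
      (-η * g t + η^2/2 * (g t)^2 / p t)) := by
    intro S
    induction S with
    | zero => simp [hW0]
    | succ S ih =>
      calc W (S+1) ≤ W S * Real.exp (-η * g S + η^2/2 * (g S)^2 / p S) := step S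
        _ ≤ (n * Real.exp (∑ t ∈ Finset.range S, (-η * g t + η^2/2 * (g t)^2 / p t)))
            * Real.exp (-η * g S + η^2/2 * (g S)^2 / p S) :=
            mul_le_mul_of_nonneg_right ih (Real.exp_pos _).le
        _ = n * Real.exp (∑ t ∈ Finset.range (S+1),
            (-η * g t + η^2/2 * (g t)^2 / p t)) := by
            rw [Finset.sum_range_succ, mul_assoc, ← Real.exp_add]
  have lower : Real.exp (-η * Ltil η ℓ ω T k) ≤ W T :=
    Finset.single_le_sum (f := fun i => Real.exp (-η * Ltil η ℓ ω T i))
      (fun i _ => (Real.exp_pos _).le) (Finset.mem_univ k)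
  have main : -η * Ltil η ℓ ω T k ≤ Real.log n
      + ∑ t ∈ Finset.range T, (-η * g t + η^2/2 * (g t)^2 / p t) := by
    have h1 : Real.exp (-η * Ltil η ℓ ω T k) ≤ n * Real.exp (∑ t ∈ Finset.range T,
        (-η * g t + η^2/2 * (g t)^2 / p t)) := lower.trans (tele T)
    have h2 := Real.log_le_log (Real.exp_pos _) h1
    rw [Real.log_exp, Real.log_mul (by exact_mod_cast hn.ne') (Real.exp_ne_zero _),
      Real.log_exp] at h2
    exact h2
  have hsumsplit : (∑ t ∈ Finset.range T, (-η * g t + η^2/2 * (g t)^2 / p t))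
      = -η * (∑ t ∈ Finset.range T, g t)
        + η^2/2 * ∑ t ∈ Finset.range T, (g t)^2 / p t := by
    rw [Finset.sum_add_distrib]
    congr 1
    · rw [← Finset.mul_sum]
    · rw [Finset.mul_sum]
      apply Finset.sum_congr rfl
      intro t _
      ring
  rw [hsumsplit] at main
  set G := ∑ t ∈ Finset.range T, g t
  set Q := ∑ t ∈ Finset.range T, (g t)^2 / p t
  have hfin : (G - (Ltil η ℓ ω T k + η/2 * Q)) * η ≤ Real.log n := by nlinarith [main]
  rw [← le_div_iff₀ hη] at hfin
  linarith

/-- Algorithm 2 with `η = √(2 ln n / (Tn))` has expected regret at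
most `√(2 T n ln n)`: the expected total loss of the alternatives it elects exceeds
the total loss of the best voter in hindsight by at most `√(2 T n ln n)`. -/
theorem alg2_regret_bound (n m T : ℕ) (hn : 0 < n) (hm : 0 < m)
    (f : (Rk m → ℝ) → Fin m → ℝ) (hf : ∀ π, IsDist (f π))
    (σ : ℕ → Fin n → Rk m) (ℓ : ℕ → Fin m → ℝ)
    (hℓ : ∀ t a, ℓ t a ∈ Set.Icc (0 : ℝ) 1)
    (η : ℝ) (hη : η = Real.sqrt (2 * Real.log n / (T * n))) :
    (∑ ω : Fin T → Fin n × Fin m,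
        trajProb η f σ ℓ (extTraj hn hm ω) T *
          ∑ t ∈ Finset.range T,
            expLoss f (anonProfile (σ t) (Pi.single ((extTraj hn hm ω t).1) 1)) (ℓ t))
      - Finset.univ.inf' (Finset.univ_nonempty_iff.mpr (Fin.pos_iff_nonempty.mp hn))
          (fun i => ∑ t ∈ Finset.range T,
            expLoss f (anonProfile (σ t) (Pi.single i 1)) (ℓ t))
      ≤ Real.sqrt (2 * T * n * Real.log n) := by
  have hc : ∀ (t : ℕ) (i : Fin n),
      expLoss f (anonProfile (σ t) (Pi.single i 1)) (ℓ t) = cexp f σ ℓ t i := fun _ _ => rfl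
  simp only [hc]
  have hne : (Finset.univ : Finset (Fin n)).Nonempty :=
    Finset.univ_nonempty_iff.mpr (Fin.pos_iff_nonempty.mp hn)
  obtain ⟨k, -, hk⟩ := Finset.exists_mem_eq_inf' hne
    (fun i => ∑ t ∈ Finset.range T, cexp f σ ℓ t i)
  rw [hk]
  -- swap step
  have hswap : (∑ ω : Fin T → Fin n × Fin m, trajProb η f σ ℓ (extTraj hn hm ω) T *
      ∑ t ∈ Finset.range T, cexp f σ ℓ t ((extTraj hn hm ω t).1))
      = ∑ ω : Fin T → Fin n × Fin m, trajProb η f σ ℓ (extTraj hn hm ω) T *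
        ∑ t ∈ Finset.range T, ℓ t ((extTraj hn hm ω t).2) := by
    have h := EE_swap hn hm η f σ ℓ hf T
    unfold EE at h
    rw [← sub_eq_zero]
    calc (∑ ω : Fin T → Fin n × Fin m, trajProb η f σ ℓ (extTraj hn hm ω) T *
          ∑ t ∈ Finset.range T, cexp f σ ℓ t ((extTraj hn hm ω t).1))
        - (∑ ω : Fin T → Fin n × Fin m, trajProb η f σ ℓ (extTraj hn hm ω) T *
          ∑ t ∈ Finset.range T, ℓ t ((extTraj hn hm ω t).2))
        = ∑ ω : Fin T → Fin n × Fin m, (trajProb η f σ ℓ (extTraj hn hm ω) T *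
            (∑ t ∈ Finset.range T, cexp f σ ℓ t ((extTraj hn hm ω t).1))
          - trajProb η f σ ℓ (extTraj hn hm ω) T *
            ∑ t ∈ Finset.range T, ℓ t ((extTraj hn hm ω t).2)) :=
          (Finset.sum_sub_distrib _ _).symm
      _ = ∑ ω : Fin T → Fin n × Fin m, trajProb η f σ ℓ (extTraj hn hm ω) T *
            ∑ t ∈ Finset.range T,
              (cexp f σ ℓ t ((extTraj hn hm ω t).1) - ℓ t ((extTraj hn hm ω t).2)) := by
          apply Finset.sum_congr rfl
          intro ω _
          rw [← mul_sub, ← Finset.sum_sub_distrib]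
      _ = 0 := by simpa using h
  rcases Nat.eq_zero_or_pos T with hT | hT0
  · subst hT
    simp only [Finset.range_zero, Finset.sum_empty, mul_zero, Finset.sum_const, smul_zero,
      sub_zero]
    exact Real.sqrt_nonneg _
  rcases eq_or_lt_of_le (Nat.one_le_iff_ne_zero.mpr hn.ne') with hn1 | hn2
  · -- n = 1 : regret is 0
    have hone : n = 1 := hn1.symm
    subst hone
    have h1 : ∀ (ω : Fin T → Fin 1 × Fin m) (t : ℕ),
        cexp f σ ℓ t ((extTraj hn hm ω t).1) = cexp f σ ℓ t k := fun ω t => by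
      congr 1
      exact Subsingleton.elim _ _
    have h2 : (∑ ω : Fin T → Fin 1 × Fin m, trajProb η f σ ℓ (extTraj hn hm ω) T *
        ∑ t ∈ Finset.range T, cexp f σ ℓ t ((extTraj hn hm ω t).1))
        = ∑ ω : Fin T → Fin 1 × Fin m, trajProb η f σ ℓ (extTraj hn hm ω) T *
          ∑ t ∈ Finset.range T, cexp f σ ℓ t k := by
      apply Finset.sum_congr rfl
      intro ω _
      rw [Finset.sum_congr rfl (fun t _ => h1 ω t)]
    rw [h2, ← Finset.sum_mul, sum_traj hn hm η f σ ℓ hf T, one_mul, sub_self]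
    exact Real.sqrt_nonneg _
  -- main case : 2 ≤ n, 1 ≤ T
  rw [hswap]
  have hlog : 0 < Real.log n := Real.log_pos (by exact_mod_cast hn2)
  have hTpos : (0:ℝ) < T := by exact_mod_cast hT0
  have hnpos : (0:ℝ) < n := by exact_mod_cast hn
  have hTn : (0:ℝ) < (T:ℝ) * n := mul_pos hTpos hnpos
  have hηpos : 0 < η := by
    rw [hη]
    exact Real.sqrt_pos.mpr (div_pos (by linarith) hTn)
  have hQ := EE_sq hn hm η f σ ℓ hf hℓ T
  have hU := EE_Ltil hn hm η f σ ℓ hf k T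
  unfold EE at hQ hU
  have hGbound : (∑ ω : Fin T → Fin n × Fin m, trajProb η f σ ℓ (extTraj hn hm ω) T *
      ∑ t ∈ Finset.range T, ℓ t ((extTraj hn hm ω t).2))
      ≤ (∑ t ∈ Finset.range T, cexp f σ ℓ t k) + Real.log n / η + η/2 * ((n:ℝ) * T) := by
    calc (∑ ω : Fin T → Fin n × Fin m, trajProb η f σ ℓ (extTraj hn hm ω) T *
          ∑ t ∈ Finset.range T, ℓ t ((extTraj hn hm ω t).2))
        ≤ ∑ ω : Fin T → Fin n × Fin m, trajProb η f σ ℓ (extTraj hn hm ω) T *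
            (Ltil η ℓ (extTraj hn hm ω) T k + Real.log n / η
              + η/2 * ∑ t ∈ Finset.range T, (ℓ t ((extTraj hn hm ω t).2))^2 /
                  pvec η (Ltil η ℓ (extTraj hn hm ω) t) ((extTraj hn hm ω t).1)) :=
          Finset.sum_le_sum (fun ω _ => mul_le_mul_of_nonneg_left
            (pathwise hn hηpos ℓ hℓ (extTraj hn hm ω) T k)
            (trajProb_nonneg hn η f σ ℓ hf _ T))
      _ = (∑ ω : Fin T → Fin n × Fin m, trajProb η f σ ℓ (extTraj hn hm ω) T *
              Ltil η ℓ (extTraj hn hm ω) T k)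
          + (∑ ω : Fin T → Fin n × Fin m, trajProb η f σ ℓ (extTraj hn hm ω) T)
              * (Real.log n / η)
          + η/2 * ∑ ω : Fin T → Fin n × Fin m, trajProb η f σ ℓ (extTraj hn hm ω) T *
              ∑ t ∈ Finset.range T, (ℓ t ((extTraj hn hm ω t).2))^2 /
                pvec η (Ltil η ℓ (extTraj hn hm ω) t) ((extTraj hn hm ω t).1) := by
          have expand : ∀ ω : Fin T → Fin n × Fin m,
              trajProb η f σ ℓ (extTraj hn hm ω) T *
                (Ltil η ℓ (extTraj hn hm ω) T k + Real.log n / η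
                  + η/2 * ∑ t ∈ Finset.range T, (ℓ t ((extTraj hn hm ω t).2))^2 /
                      pvec η (Ltil η ℓ (extTraj hn hm ω) t) ((extTraj hn hm ω t).1))
              = trajProb η f σ ℓ (extTraj hn hm ω) T * Ltil η ℓ (extTraj hn hm ω) T k
                + trajProb η f σ ℓ (extTraj hn hm ω) T * (Real.log n / η)
                + η/2 * (trajProb η f σ ℓ (extTraj hn hm ω) T *
                    ∑ t ∈ Finset.range T, (ℓ t ((extTraj hn hm ω t).2))^2 /
                      pvec η (Ltil η ℓ (extTraj hn hm ω) t) ((extTraj hn hm ω t).1)) := by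
            intro ω; ring
          rw [Finset.sum_congr rfl (fun ω _ => expand ω), Finset.sum_add_distrib,
            Finset.sum_add_distrib, ← Finset.sum_mul, ← Finset.mul_sum]
      _ ≤ (∑ t ∈ Finset.range T, cexp f σ ℓ t k) + Real.log n / η + η/2 * ((n:ℝ) * T) := by
          rw [hU, sum_traj hn hm η f σ ℓ hf T, one_mul]
          have h5 := mul_le_mul_of_nonneg_left hQ (by positivity : (0:ℝ) ≤ η/2)
          linarith
  have hη2 : η^2 = 2*Real.log n/((T:ℝ)*n) := by
    rw [hη]
    exact Real.sq_sqrt (by positivity)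
  have h2 : η^2 * ((T:ℝ)*n) = 2*Real.log n := by
    rw [hη2]; field_simp
  have h1 : Real.log n / η = η * ((T:ℝ)*n)/2 := by
    rw [div_eq_iff hηpos.ne']
    linear_combination -h2 / 2
  have h4 : η*((T:ℝ)*n) = Real.sqrt (2*T*n*Real.log n) := by
    calc η*((T:ℝ)*n)
        = Real.sqrt (2*Real.log n/((T:ℝ)*n)) * Real.sqrt (((T:ℝ)*n)^2) := by
          rw [hη, Real.sqrt_sq hTn.le]
      _ = Real.sqrt (2*Real.log n/((T:ℝ)*n) * ((T:ℝ)*n)^2) :=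
          (Real.sqrt_mul (by positivity) _).symm
      _ = Real.sqrt (2*T*n*Real.log n) := by
          congr 1
          field_simp
  have harith : Real.log n / η + η/2 * ((n:ℝ) * T) = Real.sqrt (2*T*n*Real.log n) := by
    rw [h1, ← h4]; ring
  linarith [hGbound]
end

section
/- Let w ∈ ℝ_{≥0}^n with ||w||_1 > 0, sort the weights in non-increasing order, and let N_1 be a shortest prefix of the sorted voters whose total weight W_1 exceeds ||w||_1/2. If W_1 ≥ (1/2 + δ/3)||w||_1 for some δ ∈ (0, 3/2], then |N_1| ≤ 3/(2δ) + 1. -/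
open Finset

/-- Let `w` be nonnegative weights sorted in non-increasing order
over `n` voters with positive total weight, and let the first `k` voters be a shortest
prefix whose total weight `W₁` exceeds half the total. If
`W₁ ≥ (1/2 + δ/3)·‖w‖₁` for some `δ ∈ (0, 3/2]`, then `k ≤ 3/(2δ) + 1`. -/
theorem greedy_prefix_size_bound (n k : ℕ) (hk : k ≤ n) (w : ℕ → ℝ)
    (hw : ∀ i, i < n → 0 ≤ w i)
    (hsorted : ∀ i j, i ≤ j → j < n → w j ≤ w i)
    (htot : 0 < ∑ i ∈ Finset.range n, w i)
    (δ : ℝ) (hδ : 0 < δ) (hδ' : δ ≤ 3 / 2)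
    (hover : (∑ i ∈ Finset.range n, w i) / 2 < ∑ i ∈ Finset.range k, w i)
    (hshortest : ∀ j, j < k →
      ∑ i ∈ Finset.range j, w i ≤ (∑ i ∈ Finset.range n, w i) / 2)
    (hW₁ : (1 / 2 + δ / 3) * ∑ i ∈ Finset.range n, w i
      ≤ ∑ i ∈ Finset.range k, w i) :
    (k : ℝ) ≤ 3 / (2 * δ) + 1 := by
  rcases Nat.eq_zero_or_pos k with hk0 | hk1
  · subst hk0
    have : (0:ℝ) ≤ 3 / (2 * δ) := by positivity
    simpa using by linarith
  set T := ∑ i ∈ Finset.range n, w i with hT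
  have hkn : k - 1 < n := by omega
  have hsplit : ∑ i ∈ Finset.range k, w i
      = ∑ i ∈ Finset.range (k-1), w i + w (k-1) := by
    have hkk : k = (k-1) + 1 := by omega
    conv_lhs => rw [hkk, Finset.sum_range_succ]
  have h2 := hshortest (k-1) (by omega)
  have hlast : δ / 3 * T ≤ w (k-1) := by nlinarith
  have hlb : ∀ i ∈ Finset.range (k-1), δ/3*T ≤ w i := by
    intro i hi
    simp only [Finset.mem_range] at hi
    exact le_trans hlast (hsorted i (k-1) (by omega) hkn)
  have hsum : ((k-1 : ℕ) : ℝ) * (δ/3*T) ≤ ∑ i ∈ Finset.range (k-1), w i := by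
    have := Finset.card_nsmul_le_sum (Finset.range (k-1)) w (δ/3*T) hlb
    simpa [nsmul_eq_mul] using this
  have hcast : ((k-1 : ℕ) : ℝ) = (k:ℝ) - 1 := by
    push_cast [Nat.cast_sub hk1]; ring
  rw [hcast] at hsum
  have hfin : ((k:ℝ) - 1) * (δ/3*T) ≤ T/2 := le_trans hsum h2
  rw [div_add' _ _ _ (by positivity : (2*δ:ℝ) ≠ 0), le_div_iff₀ (by positivity)]
  nlinarith
end

section
/- Let f be a probabilistically Condorcet consistent voting rule with gap δ(m) over m alternatives, and let n ≥ 2(3/(2δ(m)) + 1). Then for any deterministic weighting scheme there exists an adversarial sequence of vote profiles and loss functions over T rounds such that the regret is at least T·δ(m)/6. -/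
open Finset

attribute [local instance] Classical.propDecidable

/-- Total fraction of weight in `π` preferring `a` to `b`. -/
noncomputable def prefW {m : ℕ} (π : Rk m → ℝ) (a b : Fin m) : ℝ :=
  ∑ σ : Rk m, if σ a < σ b then π σ else 0

/-- `a` beats `b` in a pairwise majority contest under `π`. -/
def Beats {m : ℕ} (π : Rk m → ℝ) (a b : Fin m) : Prop := 1 / 2 < prefW π a b

/-- `a` ties `b` in a pairwise majority contest under `π`. -/
def TiesW {m : ℕ} (π : Rk m → ℝ) (a b : Fin m) : Prop := prefW π a b = 1 / 2

/-- The Copeland score of alternative `a` under profile `π`. -/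
noncomputable def cscore {m : ℕ} (π : Rk m → ℝ) (a : Fin m) : ℝ :=
  ((Finset.univ.filter fun b => b ≠ a ∧ Beats π a b).card : ℝ)
    + (1 / 2) * ((Finset.univ.filter fun b => b ≠ a ∧ TiesW π a b).card : ℝ)

/-- `a` is a Condorcet winner in `π`. -/
def CondorcetWinner {m : ℕ} (π : Rk m → ℝ) (a : Fin m) : Prop :=
  ∀ b, b ≠ a → Beats π a b

/-- `f` is probabilistically Condorcet consistent with gap `δ`: whenever `a` is a
Condorcet winner, `f(π)_a ≥ f(π)_x + δ` for every other alternative `x`. -/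
def ProbCondorcetConsistent {m : ℕ} (f : (Rk m → ℝ) → Fin m → ℝ) (δ : ℝ) : Prop :=
  ∀ π : Rk m → ℝ, IsDist π → ∀ a, CondorcetWinner π a →
    ∀ x, x ≠ a → f π x + δ ≤ f π a

noncomputable section PCLRAux

/-- Dirac (point-mass) anonymous profile. -/
def dirac {m : ℕ} (A : Rk m) : Rk m → ℝ := fun τ => if τ = A then 1 else 0

lemma dirac_nonneg {m : ℕ} (A : Rk m) : ∀ τ, 0 ≤ dirac A τ := by
  intro τ; unfold dirac; split <;> norm_num

lemma dirac_self {m : ℕ} (A : Rk m) : dirac A A = 1 := if_pos rfl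

lemma isDist_dirac {m : ℕ} (A : Rk m) : IsDist (dirac A) := by
  refine ⟨dirac_nonneg A, ?_⟩
  unfold dirac
  rw [Finset.sum_ite_eq' Finset.univ A (fun _ => (1:ℝ))]
  simp

lemma le_prefW {m : ℕ} (π : Rk m → ℝ) (hπ : ∀ σ, 0 ≤ π σ) (A : Rk m) {x y : Fin m}
    (h : A x < A y) : π A ≤ prefW π x y := by
  have h0 : ∀ σ ∈ (Finset.univ : Finset (Rk m)), (0:ℝ) ≤ if σ x < σ y then π σ else 0 := by
    intro σ _; split <;> [exact hπ σ; exact le_rfl]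
  have h1 := Finset.single_le_sum h0 (Finset.mem_univ A)
  rw [if_pos h] at h1
  exact h1

lemma beats_of_dirac {m : ℕ} (A : Rk m) {x y : Fin m} (h : A x < A y) :
    Beats (dirac A) x y := by
  unfold Beats
  have h1 := le_prefW (dirac A) (dirac_nonneg A) A h
  rw [dirac_self] at h1
  linarith

/-- The loss vector: 1 on `a`, 0 on `b`, 1/2 elsewhere. -/
def lossv {m : ℕ} (a b : Fin m) : Fin m → ℝ :=
  fun x => 2⁻¹ + (if x = a then 2⁻¹ else 0) - (if x = b then 2⁻¹ else 0)

lemma lossv_mem {m : ℕ} {a b : Fin m} (hab : a ≠ b) (x : Fin m) :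
    lossv a b x ∈ Set.Icc (0:ℝ) 1 := by
  unfold lossv
  rcases eq_or_ne x a with h1 | h1
  · subst h1
    rw [if_pos rfl, if_neg hab]
    norm_num
  · rw [if_neg h1]
    rcases eq_or_ne x b with h2 | h2
    · rw [if_pos h2]; norm_num
    · rw [if_neg h2]; norm_num

lemma expLoss_lossv {m : ℕ} {a b : Fin m}
    (f : (Rk m → ℝ) → Fin m → ℝ) (hf : ∀ π, IsDist (f π)) (π : Rk m → ℝ) :
    expLoss f π (lossv a b) = 2⁻¹ + (f π a - f π b) / 2 := by
  unfold expLoss lossv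
  have ha : ∑ x, f π x * (if x = a then (2:ℝ)⁻¹ else 0) = f π a * 2⁻¹ := by
    have h : ∀ x ∈ Finset.univ, f π x * (if x = a then (2:ℝ)⁻¹ else 0)
        = if x = a then f π x * 2⁻¹ else 0 := by
      intro x _; split <;> simp
    rw [Finset.sum_congr rfl h, Finset.sum_ite_eq' Finset.univ a (fun x => f π x * 2⁻¹)]
    simp
  have hb : ∑ x, f π x * (if x = b then (2:ℝ)⁻¹ else 0) = f π b * 2⁻¹ := by
    have h : ∀ x ∈ Finset.univ, f π x * (if x = b then (2:ℝ)⁻¹ else 0)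
        = if x = b then f π x * 2⁻¹ else 0 := by
      intro x _; split <;> simp
    rw [Finset.sum_congr rfl h, Finset.sum_ite_eq' Finset.univ b (fun x => f π x * 2⁻¹)]
    simp
  have hs : ∑ x, f π x * (2:ℝ)⁻¹ = 2⁻¹ := by
    rw [← Finset.sum_mul, (hf π).2, one_mul]
  have hsplit : ∀ x ∈ (Finset.univ : Finset (Fin m)),
      f π x * (2⁻¹ + (if x = a then (2:ℝ)⁻¹ else 0) - (if x = b then (2:ℝ)⁻¹ else 0))
        = f π x * 2⁻¹ + (f π x * (if x = a then (2:ℝ)⁻¹ else 0))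
            - f π x * (if x = b then (2:ℝ)⁻¹ else 0) := by
    intro x _; ring
  rw [Finset.sum_congr rfl hsplit, Finset.sum_sub_distrib, Finset.sum_add_distrib, ha, hb, hs]
  ring

lemma isDist_anonProfile {n m : ℕ} (σt : Fin n → Rk m) (w : Fin n → ℝ)
    (h0 : ∀ i, 0 ≤ w i) (hs : 0 < ∑ i, w i) : IsDist (anonProfile σt w) := by
  constructor
  · intro τ
    exact div_nonneg (Finset.sum_nonneg fun i _ => by split <;> [exact h0 i; exact le_rfl]) hs.le
  · unfold anonProfile
    rw [← Finset.sum_div, Finset.sum_comm]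
    have h : ∀ i ∈ (Finset.univ : Finset (Fin n)),
        (∑ τ : Rk m, if σt i = τ then w i else 0) = w i := by
      intro i _
      rw [Finset.sum_ite_eq Finset.univ (σt i) (fun _ => w i)]
      simp
    rw [Finset.sum_congr rfl h, div_self hs.ne']

lemma anonProfile_single {n m : ℕ} (σt : Fin n → Rk m) (i : Fin n) :
    anonProfile σt (Pi.single i 1) = dirac (σt i) := by
  funext τ
  unfold anonProfile dirac
  have hnum : (∑ j, if σt j = τ then Pi.single i (1:ℝ) j else 0)
      = if τ = σt i then 1 else 0 := by
    rw [Finset.sum_eq_single i]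
    · rw [Pi.single_eq_same]
      rcases eq_or_ne (σt i) τ with h | h
      · rw [if_pos h, if_pos h.symm]
      · rw [if_neg h, if_neg (Ne.symm h)]
    · intro j _ hj
      rw [Pi.single_eq_of_ne hj]
      exact ite_self 0
    · intro h; exact absurd (Finset.mem_univ i) h
  have hden : (∑ j, Pi.single i (1:ℝ) j) = 1 := by
    rw [Finset.sum_eq_single i]
    · exact Pi.single_eq_same i 1
    · intro j _ hj; exact Pi.single_eq_of_ne hj 1
    · intro h; exact absurd (Finset.mem_univ i) h
  rw [hnum, hden, div_one]

lemma anonProfile_block {n m : ℕ} (K : Finset (Fin n)) (A B : Rk m) (hBA : B ≠ A)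
    (w : Fin n → ℝ) :
    anonProfile (fun i => if i ∈ K then B else A) w A
      = ((∑ i, w i) - ∑ i ∈ K, w i) / (∑ i, w i) := by
  unfold anonProfile
  congr 1
  have h : ∀ i ∈ (Finset.univ : Finset (Fin n)),
      (if (if i ∈ K then B else A) = A then w i else 0) = (if i ∈ Kᶜ then w i else 0) := by
    intro i _
    by_cases h : i ∈ K
    · rw [if_pos h, if_neg hBA, if_neg (by simp [h])]
    · rw [if_neg h, if_pos rfl, if_pos (by simp [h])]
  rw [Finset.sum_congr rfl h, Finset.sum_ite_mem, Finset.univ_inter]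
  have h2 := Finset.sum_add_sum_compl K w
  linarith

lemma exists_light_subset {n : ℕ} (w : Fin n → ℝ) (hw : ∀ i, 0 ≤ w i) :
    ∀ r : ℕ, r ≤ n →
      ∃ K : Finset (Fin n), K.card = r ∧ (n:ℝ) * ∑ i ∈ K, w i ≤ (r:ℝ) * ∑ i, w i := by
  intro r
  induction r with
  | zero =>
      intro _
      refine ⟨∅, Finset.card_empty, ?_⟩
      simp
  | succ r ih =>
      intro hr
      obtain ⟨K, hKc, hKs⟩ := ih (by omega)
      have hcompl : (Kᶜ : Finset (Fin n)).Nonempty := by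
        rw [← Finset.card_pos, Finset.card_compl, hKc, Fintype.card_fin]; omega
      obtain ⟨j, hj, hjmin⟩ := Finset.exists_min_image Kᶜ w hcompl
      have hjK : j ∉ K := Finset.mem_compl.mp hj
      refine ⟨insert j K, by rw [Finset.card_insert_of_notMem hjK, hKc], ?_⟩
      rw [Finset.sum_insert hjK]
      have hcard : ((Kᶜ : Finset (Fin n)).card : ℝ) * w j ≤ ∑ i ∈ Kᶜ, w i := by
        have h3 := Finset.card_nsmul_le_sum Kᶜ w (w j) (fun i hi => hjmin i hi)
        simpa [nsmul_eq_mul] using h3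
      have hcc : ((Kᶜ : Finset (Fin n)).card : ℝ) = (n:ℝ) - r := by
        rw [Finset.card_compl, hKc, Fintype.card_fin, Nat.cast_sub (by omega)]
      have hsplit : ∑ i ∈ Kᶜ, w i = (∑ i, w i) - ∑ i ∈ K, w i := by
        have h4 := Finset.sum_add_sum_compl K w; linarith
      have hKnn : (0:ℝ) ≤ ∑ i ∈ K, w i := Finset.sum_nonneg fun i _ => hw i
      have hwj : (0:ℝ) ≤ w j := hw j
      have hrn : (r:ℝ) + 1 ≤ (n:ℝ) := by exact_mod_cast hr
      rw [hcc, hsplit] at hcard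
      push_cast
      have h1 : (0:ℝ) ≤ ((n:ℝ) - r - 1) * ((r:ℝ) * (∑ i, w i) - (n:ℝ) * ∑ i ∈ K, w i) :=
        mul_nonneg (by linarith) (by linarith)
      have h2 : (0:ℝ) < (n:ℝ) - r := by linarith
      nlinarith [h1, h2, hcard]


/-- Choose a set of `r` voters of total weight at most an `r/n` fraction. -/
def kChoose {n : ℕ} (r : ℕ) (hr : r ≤ n) (w : Fin n → ℝ) : Finset (Fin n) :=
  if h : ∀ i, 0 ≤ w i then (exists_light_subset w h r hr).choose else ∅

lemma kChoose_spec {n : ℕ} (r : ℕ) (hr : r ≤ n) (w : Fin n → ℝ) (hw : ∀ i, 0 ≤ w i) :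
    (kChoose r hr w).card = r ∧
      (n:ℝ) * ∑ i ∈ kChoose r hr w, w i ≤ (r:ℝ) * ∑ i, w i := by
  unfold kChoose
  rw [dif_pos hw]
  exact (exists_light_subset w hw r hr).choose_spec

/-- The sequence of histories generated by playing `step` against the scheme. -/
def histSeq {n m : ℕ}
    (step : List ((Fin n → Rk m) × (Fin m → ℝ)) → (Fin n → Rk m) × (Fin m → ℝ)) :
    ℕ → List ((Fin n → Rk m) × (Fin m → ℝ))
  | 0 => []
  | t+1 => histSeq step t ++ [step (histSeq step t)]

lemma hist_eq_histSeq {n m T : ℕ}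
    (step : List ((Fin n → Rk m) × (Fin m → ℝ)) → (Fin n → Rk m) × (Fin m → ℝ))
    (σ : Fin T → Fin n → Rk m) (ℓ : Fin T → Fin m → ℝ)
    (hσℓ : ∀ s : Fin T, (σ s, ℓ s) = step (histSeq step s.1)) :
    ∀ t : Fin T, hist σ ℓ t = histSeq step t.1 := by
  have main : ∀ k, k ≤ T →
      (((List.finRange T).take k).map fun s => (σ s, ℓ s)) = histSeq step k := by
    intro k
    induction k with
    | zero => intro _; simp [histSeq]
    | succ k ih =>
        intro hk
        have hkT : k < T := hk
        have hlen : k < (List.finRange T).length := by simpa using hkT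
        rw [List.take_succ, List.map_append, ih (le_of_lt hkT)]
        have hopt : (List.finRange T)[k]? = some ⟨k, hkT⟩ := by
          rw [List.getElem?_eq_getElem hlen]
          congr 1
          simp [List.getElem_finRange]
        rw [hopt]
        show histSeq step k ++ [(σ ⟨k, hkT⟩, ℓ ⟨k, hkT⟩)] = histSeq step (k+1)
        rw [hσℓ ⟨k, hkT⟩]
        rfl
  intro t
  exact main t.1 (le_of_lt t.2)



lemma round_arith (n r : ℕ) (δ α β X : ℝ) (hfab : δ ≤ X)
    (hα2 : α ≤ 1) (hsign : α + β ≤ 0) (hnδ : 3 ≤ (n:ℝ) * δ)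
    (h2rR : 2*(r:ℝ) ≤ (n:ℝ) - 1) (hn2r : (n:ℝ) ≤ 2*(r:ℝ) + 2) (hnR : (0:ℝ) < (n:ℝ)) :
    (n:ℝ) * δ / 6 ≤ (n:ℝ) * (2⁻¹ + X/2)
      - ((r:ℝ) * (2⁻¹ + β/2) + ((n:ℝ) - r) * (2⁻¹ + α/2)) := by
  have hrR : (0:ℝ) ≤ (r:ℝ) := by positivity
  have hp1 : (n:ℝ)*δ ≤ (n:ℝ)*X := mul_le_mul_of_nonneg_left hfab hnR.le
  have hp2 : (r:ℝ)*(α + β) ≤ 0 := mul_nonpos_of_nonneg_of_nonpos hrR hsign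
  have hp3 : ((n:ℝ) - 2*r)*α ≤ ((n:ℝ) - 2*r) * 1 :=
    mul_le_mul_of_nonneg_left hα2 (by linarith)
  nlinarith [hp1, hp2, hp3, hnδ, hn2r]

lemma half_lt (n r : ℕ) (S SK : ℝ) (hKsum : (n:ℝ) * SK ≤ (r:ℝ) * S)
    (hS : 0 < S) (hSK : 0 ≤ SK) (h2rR : 2*(r:ℝ) ≤ (n:ℝ) - 1) (hnR : (0:ℝ) < (n:ℝ)) :
    1/2 * S < S - SK := by
  nlinarith [hKsum, hS, hSK, h2rR, hnR]

lemma core_bound (n m T : ℕ) (f : (Rk m → ℝ) → Fin m → ℝ) (hf : ∀ π, IsDist (f π))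
    (δ : ℝ) (hδ : 0 < δ) (hPCC : ProbCondorcetConsistent f δ)
    (hn : 2 * (3 / (2 * δ) + 1) ≤ (n : ℝ))
    (W : List ((Fin n → Rk m) × (Fin m → ℝ)) → Fin n → ℝ)
    (hW : ∀ h, (∀ i, 0 ≤ W h i) ∧ 0 < ∑ i, W h i)
    (H : (Finset.univ : Finset (Fin n)).Nonempty)
    (a b : Fin m) (hab : a ≠ b) (A B : Rk m)
    (hA : ∀ x, x ≠ a → A a < A x) (hB : ∀ x, x ≠ b → B b < B x)
    (hsign : (f (dirac A) a - f (dirac A) b) + (f (dirac B) a - f (dirac B) b) ≤ 0) :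
    ∃ (σ : Fin T → Fin n → Rk m) (ℓ : Fin T → Fin m → ℝ),
      (∀ t x, ℓ t x ∈ Set.Icc (0 : ℝ) 1) ∧
      (T : ℝ) * δ / 6 ≤
        (∑ t, expLoss f (anonProfile (σ t) (W (hist σ ℓ t))) (ℓ t))
          - Finset.univ.inf' H
              (fun i => ∑ t, expLoss f (anonProfile (σ t) (Pi.single i 1)) (ℓ t)) := by
  classical
  have hn0 : 0 < n := Fin.pos_iff_nonempty.mpr (Finset.univ_nonempty_iff.mp H)
  have hnR : (0:ℝ) < (n:ℝ) := by exact_mod_cast hn0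
  set r : ℕ := (n-1)/2 with hrdef
  have hr : r ≤ n := by omega
  -- the two rankings are distinct
  have hBA : B ≠ A := by
    intro h
    have h1 := hA b (Ne.symm hab)
    have h2 := hB a hab
    rw [← h] at h1
    exact absurd h1 (not_lt.mpr (le_of_lt h2))
  -- basic constants
  set α : ℝ := f (dirac A) a - f (dirac A) b with hαdef
  set β : ℝ := f (dirac B) a - f (dirac B) b with hβdef
  have hCWA : CondorcetWinner (dirac A) a := fun x hx => beats_of_dirac A (hA x hx)
  have hCWB : CondorcetWinner (dirac B) b := fun x hx => beats_of_dirac B (hB x hx)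
  have hα1 : δ ≤ α := by
    have h1 := hPCC (dirac A) (isDist_dirac A) a hCWA b (Ne.symm hab)
    rw [hαdef]; linarith
  have hα2 : α ≤ 1 := by
    have h1 : f (dirac A) a ≤ 1 := by
      have h2 := (hf (dirac A)).2
      have h3 := Finset.single_le_sum (f := f (dirac A)) (fun x _ => (hf (dirac A)).1 x)
        (Finset.mem_univ a)
      linarith
    have h4 := (hf (dirac A)).1 b
    rw [hαdef]; linarith
  have hβ1 : β ≤ -δ := by
    have h1 := hPCC (dirac B) (isDist_dirac B) b hCWB a hab
    rw [hβdef]; linarith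
  have hnδ : 3 ≤ (n:ℝ) * δ := by
    have h1 : 2 * (3 / (2*δ) + 1) = 3/δ + 2 := by field_simp
    have h2 : 3/δ + 2 ≤ (n:ℝ) := by rw [← h1]; exact hn
    have h3 : 3/δ * δ = 3 := div_mul_cancel₀ 3 hδ.ne'
    nlinarith [mul_le_mul_of_nonneg_right h2 hδ.le]
  have h2rR : 2*(r:ℝ) ≤ (n:ℝ) - 1 := by
    have h1 : 2*r ≤ n - 1 := by omega
    have h2 : ((2*r : ℕ) : ℝ) ≤ ((n - 1 : ℕ) : ℝ) := by exact_mod_cast h1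
    rw [Nat.cast_sub hn0] at h2
    push_cast at h2
    linarith
  have hn2r : (n:ℝ) ≤ 2*(r:ℝ) + 2 := by
    have h1 : n ≤ 2*r + 2 := by omega
    exact_mod_cast h1
  -- the adversary's per-round move
  set step : List ((Fin n → Rk m) × (Fin m → ℝ)) → (Fin n → Rk m) × (Fin m → ℝ) :=
    fun h => (fun i => if i ∈ kChoose r hr (W h) then B else A, lossv a b) with hstep
  set σ : Fin T → Fin n → Rk m := fun t => (step (histSeq step t.1)).1 with hσdef
  set ℓ : Fin T → Fin m → ℝ := fun t => lossv a b with hℓdef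
  have hσℓ : ∀ s : Fin T, (σ s, ℓ s) = step (histSeq step s.1) := by
    intro s
    rw [hσdef, hℓdef, hstep]
  have hhist : ∀ t : Fin T, hist σ ℓ t = histSeq step t.1 :=
    hist_eq_histSeq step σ ℓ hσℓ
  refine ⟨σ, ℓ, fun t x => by rw [hℓdef]; exact lossv_mem hab x, ?_⟩
  -- per-round bound
  have key : ∀ t : Fin T,
      (n:ℝ) * δ / 6 ≤ (n:ℝ) * expLoss f (anonProfile (σ t) (W (hist σ ℓ t))) (ℓ t)
        - ∑ i, expLoss f (anonProfile (σ t) (Pi.single i 1)) (ℓ t) := by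
    intro t
    rw [hhist t]
    set w : Fin n → ℝ := W (histSeq step t.1) with hwdef
    obtain ⟨hw0, hwpos⟩ := hW (histSeq step t.1)
    set K : Finset (Fin n) := kChoose r hr w with hKdef
    obtain ⟨hKcard, hKsum⟩ := kChoose_spec r hr w hw0
    have hσt : σ t = fun i => if i ∈ K then B else A := by
      rw [hσdef, hstep]
    have hℓt : ℓ t = lossv a b := by rw [hℓdef]
    rw [hσt, hℓt]
    -- the condorcet winner of the weighted profile is `a`
    have hdist := isDist_anonProfile (fun i => if i ∈ K then B else A) w hw0 hwpos
    have hπA : anonProfile (fun i => if i ∈ K then B else A) w A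
        = ((∑ i, w i) - ∑ i ∈ K, w i)/(∑ i, w i) := anonProfile_block K A B hBA w
    have hKnn : (0:ℝ) ≤ ∑ i ∈ K, w i := Finset.sum_nonneg fun i _ => hw0 i
    have hhalf : 1/2 < anonProfile (fun i => if i ∈ K then B else A) w A := by
      rw [hπA, lt_div_iff₀ hwpos]
      exact half_lt n r _ _ hKsum hwpos hKnn h2rR hnR
    have hCW : CondorcetWinner (anonProfile (fun i => if i ∈ K then B else A) w) a := by
      intro x hx
      unfold Beats
      exact lt_of_lt_of_le hhalf
        (le_prefW (anonProfile (fun i => if i ∈ K then B else A) w) hdist.1 A (hA x hx))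
    have hPCCt := hPCC (anonProfile (fun i => if i ∈ K then B else A) w) hdist a hCW b
      (Ne.symm hab)
    -- the comparator losses
    have hv : ∀ i : Fin n,
        expLoss f (anonProfile (fun j => if j ∈ K then B else A) (Pi.single i 1)) (lossv a b)
          = if i ∈ K then 2⁻¹ + β/2 else 2⁻¹ + α/2 := by
      intro i
      rw [anonProfile_single (fun j => if j ∈ K then B else A) i]
      by_cases h : i ∈ K
      · simp only [h, if_true]
        rw [expLoss_lossv f hf, hβdef]
      · simp only [h, if_false]
        rw [expLoss_lossv f hf, hαdef]
    have hvsum : (∑ i, expLoss f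
          (anonProfile (fun j => if j ∈ K then B else A) (Pi.single i 1)) (lossv a b))
        = (r:ℝ) * (2⁻¹ + β/2) + ((n:ℝ) - r) * (2⁻¹ + α/2) := by
      rw [Finset.sum_congr rfl (fun i _ => hv i), ← Finset.sum_add_sum_compl K]
      have hc1 : (∑ i ∈ K, if i ∈ K then (2⁻¹ + β/2 : ℝ) else 2⁻¹ + α/2)
          = (r:ℝ) * (2⁻¹ + β/2) := by
        rw [Finset.sum_congr rfl (fun i hi => if_pos hi), Finset.sum_const, hKcard,
          nsmul_eq_mul]
      have hc2 : (∑ i ∈ Kᶜ, if i ∈ K then (2⁻¹ + β/2 : ℝ) else 2⁻¹ + α/2)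
          = ((n:ℝ) - r) * (2⁻¹ + α/2) := by
        rw [Finset.sum_congr rfl (fun i hi => if_neg (Finset.mem_compl.mp hi)),
          Finset.sum_const, Finset.card_compl, hKcard, Fintype.card_fin, nsmul_eq_mul,
          Nat.cast_sub hr]
      rw [hc1, hc2]
    rw [hvsum, expLoss_lossv f hf]
    -- final per-round arithmetic
    have hfab : δ ≤ f (anonProfile (fun i => if i ∈ K then B else A) w) a
        - f (anonProfile (fun i => if i ∈ K then B else A) w) b := by linarith
    exact round_arith n r δ α β _ hfab hα2 hsign hnδ h2rR hn2r hnR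
  -- sum the per-round bounds
  set VI : Fin n → ℝ := fun i => ∑ t, expLoss f (anonProfile (σ t) (Pi.single i 1)) (ℓ t)
    with hVIdef
  have hSum : (T:ℝ) * ((n:ℝ)*δ/6) ≤
      (n:ℝ) * (∑ t, expLoss f (anonProfile (σ t) (W (hist σ ℓ t))) (ℓ t)) - ∑ i, VI i := by
    calc (T:ℝ) * ((n:ℝ)*δ/6) = ∑ _t : Fin T, (n:ℝ)*δ/6 := by
          rw [Finset.sum_const, Finset.card_univ, Fintype.card_fin, nsmul_eq_mul]
      _ ≤ ∑ t, ((n:ℝ) * expLoss f (anonProfile (σ t) (W (hist σ ℓ t))) (ℓ t)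
            - ∑ i, expLoss f (anonProfile (σ t) (Pi.single i 1)) (ℓ t)) :=
          Finset.sum_le_sum (fun t _ => key t)
      _ = (n:ℝ) * (∑ t, expLoss f (anonProfile (σ t) (W (hist σ ℓ t))) (ℓ t)) - ∑ i, VI i := by
          rw [Finset.sum_sub_distrib, ← Finset.mul_sum, Finset.sum_comm]
  have hInf : (n:ℝ) * (Finset.univ.inf' H VI) ≤ ∑ i, VI i := by
    have h1 := Finset.card_nsmul_le_sum Finset.univ VI (Finset.univ.inf' H VI)
      (fun i _ => Finset.inf'_le VI (Finset.mem_univ i))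
    rw [Finset.card_univ, Fintype.card_fin, nsmul_eq_mul] at h1
    exact h1
  set SA : ℝ := ∑ t, expLoss f (anonProfile (σ t) (W (hist σ ℓ t))) (ℓ t) with hSAdef
  set I : ℝ := Finset.univ.inf' H VI with hIdef
  have hfin : (n:ℝ) * ((T:ℝ)*δ/6) ≤ (n:ℝ) * (SA - I) := by
    have h1 : (T:ℝ)*((n:ℝ)*δ/6) = (n:ℝ)*((T:ℝ)*δ/6) := by ring
    have h2 : (n:ℝ)*(SA - I) = (n:ℝ)*SA - (n:ℝ)*I := by ring
    linarith [hSum, hInf]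
  exact (mul_le_mul_iff_right₀ hnR).mp hfin

end PCLRAux


/-- If `f` is probabilistically Condorcet consistent with gap `δ`
over `m` alternatives and `n ≥ 2(3/(2δ) + 1)`, then every deterministic weighting
scheme `W` admits an adversarial sequence of vote profiles and loss functions (with
losses in `[0,1]`) over `T` rounds forcing regret at least `T·δ/6`. -/
theorem prob_condorcet_linear_regret (n m T : ℕ) (hm : 2 ≤ m)
    (f : (Rk m → ℝ) → Fin m → ℝ) (hf : ∀ π, IsDist (f π))
    (δ : ℝ) (hδ : 0 < δ) (hPCC : ProbCondorcetConsistent f δ)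
    (hn : 2 * (3 / (2 * δ) + 1) ≤ (n : ℝ))
    (W : List ((Fin n → Rk m) × (Fin m → ℝ)) → Fin n → ℝ)
    (hW : ∀ h, (∀ i, 0 ≤ W h i) ∧ 0 < ∑ i, W h i) :
    ∃ (σ : Fin T → Fin n → Rk m) (ℓ : Fin T → Fin m → ℝ),
      (∀ t x, ℓ t x ∈ Set.Icc (0 : ℝ) 1) ∧
      (T : ℝ) * δ / 6 ≤
        (∑ t, expLoss f (anonProfile (σ t) (W (hist σ ℓ t))) (ℓ t))
          - Finset.univ.inf'
              (Finset.univ_nonempty_iff.mpr (Fin.pos_iff_nonempty.mp (by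
                have h0 : (0 : ℝ) < 3 / (2 * δ) := by positivity
                have h1 : (0 : ℝ) < (n : ℝ) := by nlinarith
                exact_mod_cast h1)))
              (fun i => ∑ t, expLoss f (anonProfile (σ t) (Pi.single i 1)) (ℓ t)) := by
  classical
  have h0m : 0 < m := by omega
  have h1m : 1 < m := by omega
  set a0 : Fin m := ⟨0, h0m⟩ with ha0
  set b0 : Fin m := ⟨1, h1m⟩ with hb0
  have hab : a0 ≠ b0 := by
    rw [ha0, hb0]
    intro h
    exact absurd (congrArg Fin.val h) (by norm_num)
  have ha0v : a0.1 = 0 := rfl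
  have hbot : ∀ y : Fin m, y ≠ a0 → a0 < y := by
    intro y hy
    rw [Fin.lt_def, ha0v]
    have : y.1 ≠ 0 := by
      intro h; exact hy (Fin.ext (by rw [h, ha0v]))
    omega
  have htop1 : ∀ x, x ≠ a0 → (1 : Rk m) a0 < (1 : Rk m) x := by
    intro x hx
    have e1 : (1 : Rk m) a0 = a0 := rfl
    have e2 : (1 : Rk m) x = x := rfl
    rw [e1, e2]
    exact hbot x hx
  have htop2 : ∀ x, x ≠ b0 → (Equiv.swap a0 b0) b0 < (Equiv.swap a0 b0) x := by
    intro x hx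
    rw [Equiv.swap_apply_right]
    refine hbot _ ?_
    intro h
    apply hx
    exact (Equiv.swap a0 b0).injective (h.trans (Equiv.swap_apply_right a0 b0).symm)
  have H : (Finset.univ : Finset (Fin n)).Nonempty := by
    refine Finset.univ_nonempty_iff.mpr (Fin.pos_iff_nonempty.mp ?_)
    have h0 : (0 : ℝ) < 3 / (2 * δ) := by positivity
    have h1 : (0 : ℝ) < (n : ℝ) := by nlinarith
    exact_mod_cast h1
  rcases le_or_gt ((f (dirac (1 : Rk m)) a0 - f (dirac (1 : Rk m)) b0)
      + (f (dirac (Equiv.swap a0 b0)) a0 - f (dirac (Equiv.swap a0 b0)) b0)) 0 with hs | hs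
  · exact core_bound n m T f hf δ hδ hPCC hn W hW H a0 b0 hab 1 (Equiv.swap a0 b0)
      htop1 htop2 hs
  · have hs' : (f (dirac (Equiv.swap a0 b0)) b0 - f (dirac (Equiv.swap a0 b0)) a0)
        + (f (dirac (1 : Rk m)) b0 - f (dirac (1 : Rk m)) a0) ≤ 0 := by linarith
    exact core_bound n m T f hf δ hδ hPCC hn W hW H b0 a0 (Ne.symm hab)
      (Equiv.swap a0 b0) 1 htop2 htop1 hs'
end

section
/- No voting rule that is a distribution over unilaterals is probabilistically Condorcet consistent with any gap δ > 0 (for m ≥ 2 alternatives and n ≥ 2(3/(2δ)+1) voters). In particular, no randomized positional scoring rule is probabilistically Condorcet consistent. -/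
open Finset

attribute [local instance] Classical.propDecidable

/-- `f` is a distribution over unilateral rules. -/
def DistOverUnilaterals {m : ℕ} (f : (Rk m → ℝ) → Fin m → ℝ) : Prop :=
  ∃ (k : ℕ) (q : Fin k → ℝ) (h : Fin k → Rk m → Fin m),
    (∀ j, 0 ≤ q j) ∧ (∑ j, q j = 1) ∧
    ∀ π a, f π a = ∑ j, q j * ∑ τ : Rk m, π τ * (if h j τ = a then 1 else 0)

/-- The randomized positional scoring rule with score vector `s`: each alternative is
chosen with probability proportional to its `s`-score. -/
noncomputable def randScoringRule {m : ℕ} (s : Fin m → ℝ) :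
    (Rk m → ℝ) → Fin m → ℝ :=
  fun π a => (∑ σ : Rk m, π σ * s (σ a)) / ∑ j, s j


section Aux

private lemma sum_two' {α : Type*} [Fintype α] [DecidableEq α] (x y : α)
    (c d : ℝ) (F : α → ℝ) :
    ∑ t, F t * ((if t = x then c else 0) + (if t = y then d else 0))
      = F x * c + F y * d := by
  simp [mul_add, Finset.sum_add_distrib, mul_ite]

private lemma prefW_two {m : ℕ} (σ1 σ2 : Rk m) (c d : ℝ) (x y : Fin m) :
    prefW (fun τ => (if τ = σ1 then c else 0) + (if τ = σ2 then d else 0)) x y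
      = (if σ1 x < σ1 y then (1:ℝ) else 0) * c
        + (if σ2 x < σ2 y then (1:ℝ) else 0) * d := by
  have e : prefW (fun τ => (if τ = σ1 then c else 0) + (if τ = σ2 then d else 0)) x y
      = ∑ σ : Rk m, (if σ x < σ y then (1:ℝ) else 0)
          * ((if σ = σ1 then c else 0) + (if σ = σ2 then d else 0)) := by
    unfold prefW
    refine Finset.sum_congr rfl fun σ _ => ?_
    split <;> simp
  rw [e, sum_two' σ1 σ2]

private lemma key_lemma {m : ℕ} (hm : 2 ≤ m) (δ : ℝ) (hδ : 0 < δ)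
    (f : (Rk m → ℝ) → Fin m → ℝ) (g : Rk m → Fin m → ℝ)
    (hg0 : ∀ τ a, 0 ≤ g τ a) (hg1 : ∀ τ a, g τ a ≤ 1)
    (hf : ∀ π a, f π a = ∑ τ, π τ * g τ a) :
    ¬ ProbCondorcetConsistent f δ := by
  intro hcc
  have h0 : 0 < m := by omega
  have h1 : 1 < m := by omega
  set a : Fin m := ⟨0, h0⟩ with ha
  set b : Fin m := ⟨1, h1⟩ with hb
  have hab : a ≠ b := by simp [ha, hb, Fin.ext_iff]
  have hε0 : 0 < min δ 1 / 8 := by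
    have : 0 < min δ 1 := lt_min hδ one_pos
    linarith
  set ε : ℝ := min δ 1 / 8 with hε
  have hεδ : 8 * ε ≤ δ := by
    have : min δ 1 ≤ δ := min_le_left _ _
    rw [hε]; linarith
  have hε1 : ε ≤ 1 / 8 := by
    have : min δ 1 ≤ 1 := min_le_right _ _
    rw [hε]; linarith
  set σ1 : Rk m := 1 with hσ1
  set σ2 : Rk m := Equiv.swap a b with hσ2
  set π : Rk m → ℝ :=
    fun τ => (if τ = σ1 then 1/2 + ε else 0) + (if τ = σ2 then 1/2 - ε else 0) with hπ
  set π' : Rk m → ℝ :=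
    fun τ => (if τ = σ1 then 1/2 - ε else 0) + (if τ = σ2 then 1/2 + ε else 0) with hπ'
  -- distributions
  have hd : ∀ c d : ℝ, 0 ≤ c → 0 ≤ d → c + d = 1 →
      IsDist (fun τ : Rk m => (if τ = σ1 then c else 0) + (if τ = σ2 then d else 0)) := by
    intro c d hc hd hcd
    constructor
    · intro τ
      have : (0:ℝ) ≤ (if τ = σ1 then c else 0) := by split <;> simp [hc]
      have : (0:ℝ) ≤ (if τ = σ2 then d else 0) := by split <;> simp [hd]
      positivity
    · simp [Finset.sum_add_distrib, hcd]
  have hdπ : IsDist π := by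
    rw [hπ]; exact hd _ _ (by linarith) (by linarith) (by ring)
  have hdπ' : IsDist π' := by
    rw [hπ']; exact hd _ _ (by linarith) (by linarith) (by ring)
  -- Condorcet winners
  have hcwa : CondorcetWinner π a := by
    intro c hc
    unfold Beats
    rw [hπ, prefW_two]
    have h1c : σ1 a < σ1 c := by
      simp only [hσ1, Equiv.Perm.coe_one, id_eq]
      have : c.val ≠ 0 := by
        intro h; exact hc (Fin.ext (by simp [ha, h]))
      exact Fin.lt_def.mpr (by simp [ha]; omega)
    rw [if_pos h1c]
    have : (0:ℝ) ≤ (if σ2 a < σ2 c then (1:ℝ) else 0) * (1/2 - ε) := by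
      have : (1:ℝ)/2 - ε ≥ 0 := by linarith
      split <;> nlinarith
    nlinarith
  have hcwb : CondorcetWinner π' b := by
    intro c hc
    unfold Beats
    rw [hπ', prefW_two]
    have h2c : σ2 b < σ2 c := by
      have hσ2b : σ2 b = a := by rw [hσ2]; exact Equiv.swap_apply_right a b
      have hσ2c : (σ2 c).val ≠ 0 := by
        intro h
        have : σ2 c = a := Fin.ext (by simp [ha, h])
        have : c = b := by
          have := congrArg σ2.symm this
          simpa [hσ2, Equiv.swap_apply_left] using this
        exact hc this
      rw [hσ2b]
      exact Fin.lt_def.mpr (by simp [ha]; omega)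
    rw [if_pos h2c]
    have : (0:ℝ) ≤ (if σ1 b < σ1 c then (1:ℝ) else 0) * (1/2 - ε) := by
      have : (1:ℝ)/2 - ε ≥ 0 := by linarith
      split <;> nlinarith
    nlinarith
  -- values of f
  have hfv : ∀ (c d : ℝ) (x : Fin m),
      f (fun τ : Rk m => (if τ = σ1 then c else 0) + (if τ = σ2 then d else 0)) x
        = g σ1 x * c + g σ2 x * d := by
    intro c d x
    rw [hf]
    rw [show (∑ τ : Rk m, ((if τ = σ1 then c else 0) + (if τ = σ2 then d else 0)) * g τ x)
          = ∑ τ : Rk m, g τ x * ((if τ = σ1 then c else 0) + (if τ = σ2 then d else 0)) from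
        Finset.sum_congr rfl fun τ _ => mul_comm _ _]
    exact sum_two' σ1 σ2 c d _
  have e1 : f π b + δ ≤ f π a := hcc π hdπ a hcwa b hab.symm
  have e2 : f π' a + δ ≤ f π' b := hcc π' hdπ' b hcwb a hab
  rw [hπ, hfv, hfv] at e1
  rw [hπ', hfv, hfv] at e2
  have hA1 := hg1 σ1 a
  have hA2 := hg0 σ2 a
  have hB2 := hg1 σ2 b
  have hB1 := hg0 σ1 b
  have hA1' := hg0 σ1 a
  have hB2' := hg0 σ2 b
  nlinarith [mul_nonneg hε0.le (sub_nonneg.mpr hA1), mul_nonneg hε0.le hA2,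
    mul_nonneg hε0.le (sub_nonneg.mpr hB2), mul_nonneg hε0.le hB1]

end Aux

/-- For `m ≥ 2` alternatives (and `n ≥ 2(3/(2δ)+1)` voters), no
voting rule that is a distribution over unilaterals is probabilistically Condorcet
consistent with any gap `δ > 0`; in particular, no randomized positional scoring rule
is probabilistically Condorcet consistent. -/
theorem distOverUnilaterals_not_condorcet_consistent (m n : ℕ) (hm : 2 ≤ m)
    (δ : ℝ) (hδ : 0 < δ) (hn : 2 * (3 / (2 * δ) + 1) ≤ (n : ℝ)) :
    (∀ f : (Rk m → ℝ) → Fin m → ℝ,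
        DistOverUnilaterals f → ¬ ProbCondorcetConsistent f δ) ∧
    (∀ s : Fin m → ℝ, (∀ i, 0 ≤ s i) → (∀ i j : Fin m, i ≤ j → s j ≤ s i) →
        0 < ∑ i, s i → ¬ ProbCondorcetConsistent (randScoringRule s) δ) := by
  constructor
  · intro f hdu
    obtain ⟨k, q, h, hq0, hq1, hfv⟩ := hdu
    refine key_lemma hm δ hδ f (fun τ a => ∑ j, q j * (if h j τ = a then 1 else 0))
      ?_ ?_ ?_
    · intro τ a
      refine Finset.sum_nonneg fun j _ => mul_nonneg (hq0 j) ?_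
      split <;> norm_num
    · intro τ a
      calc ∑ j, q j * (if h j τ = a then 1 else 0) ≤ ∑ j, q j := by
            refine Finset.sum_le_sum fun j _ => ?_
            split <;> simp [hq0 j]
        _ = 1 := hq1
    · intro π x
      rw [hfv]
      simp_rw [Finset.mul_sum]
      rw [Finset.sum_comm]
      exact Finset.sum_congr rfl fun τ _ => Finset.sum_congr rfl fun j _ => by ring
  · intro s hs0 hmono hssum
    refine key_lemma hm δ hδ (randScoringRule s) (fun τ a => s (τ a) / ∑ j, s j)
      ?_ ?_ ?_
    · intro τ a; exact div_nonneg (hs0 _) hssum.le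
    · intro τ a
      rw [div_le_one hssum]
      exact Finset.single_le_sum (f := s) (fun i _ => hs0 i) (Finset.mem_univ _)
    · intro π a
      unfold randScoringRule
      rw [Finset.sum_div]
      exact Finset.sum_congr rfl fun σ _ => mul_div_assoc _ _ _
end
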